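/- arXiv:1105.1274 — 5 statements merged into one kernel-verified Lean document; each statement's English description precedes it below -/
import Mathlib

section
/- Let T be a natural number, let X₀,…,X_T be i.i.d. random variables uniformly distributed on [0,1], and let Y be uniformly distributed on [0,1] and independent of the X's. Then the probability of the event {X_t < Y for all t < T and X_T ≥ Y} equals 1 / ((T+1)(T+2)). In particular, for uniform state and threshold distributions the quenched-threshold (η = 1) quiescent-time distribution P(T) = 1/((T+1)(T+2)) has a power-law tail with exponent −2. -/
open MeasureTheory ProbabilityTheory

noncomputable def mu : Measure ℝ := volume.restrict (Set.Icc (0:ℝ) 1)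

instance : IsProbabilityMeasure mu := ⟨by simp [mu, Real.volume_Icc]⟩

lemma mu_def : mu = volume.restrict (Set.Icc (0:ℝ) 1) := rfl

lemma mu_Iio {y : ℝ} (h0 : 0 ≤ y) (h1 : y ≤ 1) :
    (volume.restrict (Set.Icc (0:ℝ) 1)) (Set.Iio y) = ENNReal.ofReal y := by
  rw [Measure.restrict_apply measurableSet_Iio]
  have h : Set.Iio y ∩ Set.Icc 0 1 = Set.Ico 0 y := by
    ext x; simp only [Set.mem_inter_iff, Set.mem_Iio, Set.mem_Icc, Set.mem_Ico]
    constructor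
    · rintro ⟨ha, hb, hc⟩; exact ⟨hb, ha⟩
    · rintro ⟨ha, hb⟩; exact ⟨hb, ha, by linarith⟩
  rw [h, Real.volume_Ico, sub_zero]

lemma mu_Ici {y : ℝ} (h0 : 0 ≤ y) (h1 : y ≤ 1) :
    (volume.restrict (Set.Icc (0:ℝ) 1)) (Set.Ici y) = ENNReal.ofReal (1 - y) := by
  rw [Measure.restrict_apply measurableSet_Ici]
  have h : Set.Ici y ∩ Set.Icc 0 1 = Set.Icc y 1 := by
    ext x; simp only [Set.mem_inter_iff, Set.mem_Ici, Set.mem_Icc]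
    constructor
    · rintro ⟨ha, _, hc⟩; exact ⟨ha, hc⟩
    · rintro ⟨ha, hb⟩; exact ⟨ha, by linarith, hb⟩
  rw [h, Real.volume_Icc]

lemma integral_pow_one_sub (T : ℕ) :
    ∫ y in Set.Icc (0:ℝ) 1, y ^ T * (1 - y) = 1 / ((T + 1) * (T + 2)) := by
  rw [MeasureTheory.integral_Icc_eq_integral_Ioc, ← intervalIntegral.integral_of_le zero_le_one]
  have heq : ∀ y : ℝ, y ^ T * (1 - y) = y ^ T - y ^ (T + 1) := by intro y; ring
  simp_rw [heq]
  rw [intervalIntegral.integral_sub (intervalIntegral.intervalIntegrable_pow T)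
    (intervalIntegral.intervalIntegrable_pow (T+1)), integral_pow, integral_pow]
  have h1 : (T:ℝ) + 1 ≠ 0 := by positivity
  have h2 : (T:ℝ) + 2 ≠ 0 := by positivity
  push_cast
  rw [one_pow, one_pow]
  norm_num
  rw [inv_sub_inv h1 (by linarith : (T:ℝ)+1+1 ≠ 0)]
  rw [show ((T:ℝ)+2)⁻¹ * ((T:ℝ)+1)⁻¹ = (T+1+1-(T+1))/((T+1)*(T+1+1)) by
    rw [eq_div_iff (by positivity)]; field_simp; ring]

lemma joint_law {Ω : Type*} [MeasurableSpace Ω] (P : Measure Ω) [IsProbabilityMeasure P]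
    {ι : Type*} [Fintype ι] (f : ι → Ω → ℝ) (hf : ∀ i, Measurable (f i))
    (hlaw : ∀ i, P.map (f i) = mu)
    (hindep : iIndepFun f P) :
    P.map (fun ω i => f i ω) = Measure.pi (fun _ : ι => mu) := by
  have hZ : Measurable (fun ω i => f i ω) := measurable_pi_lambda _ hf
  symm
  apply Measure.pi_eq
  intro s hs
  rw [Measure.map_apply hZ (MeasurableSet.univ_pi hs)]
  have hpre : (fun ω i => f i ω) ⁻¹' Set.pi Set.univ s = ⋂ i ∈ Finset.univ, f i ⁻¹' s i := by
    ext ω; simp [Set.mem_pi]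
  rw [hpre, iIndepFun_iff_measure_inter_preimage_eq_mul.mp hindep Finset.univ fun i _ => hs i]
  refine Finset.prod_congr rfl fun i _ => ?_
  rw [← Measure.map_apply (hf i) (hs i), hlaw i]

lemma pi_measure_S (T : ℕ) :
    (Measure.pi fun _ : Fin (T+1) ⊕ Unit => mu)
      {x | (∀ t : Fin (T + 1), (t : ℕ) < T → x (Sum.inl t) < x (Sum.inr ())) ∧
        x (Sum.inr ()) ≤ x (Sum.inl (Fin.last T))}
      = ENNReal.ofReal (1 / ((T + 1) * (T + 2))) := by
  classical
  set S' : Set ((Fin (T+1) → ℝ) × (Unit → ℝ)) :=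
    {p | (∀ t : Fin (T + 1), (t : ℕ) < T → p.1 t < p.2 ()) ∧ p.2 () ≤ p.1 (Fin.last T)} with hS'def
  have hS' : MeasurableSet S' := by
    have : S' = (⋂ t : Fin (T+1), ⋂ _ : (t:ℕ) < T,
        {p : (Fin (T+1) → ℝ) × (Unit → ℝ) | p.1 t < p.2 ()})
        ∩ {p | p.2 () ≤ p.1 (Fin.last T)} := by
      ext p; simp [hS'def, Set.mem_iInter]
    rw [this]
    apply MeasurableSet.inter
    · refine MeasurableSet.iInter fun t => MeasurableSet.iInter fun _ => ?_
      exact measurableSet_lt (by fun_prop) (by fun_prop)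
    · exact measurableSet_le (by fun_prop) (by fun_prop)
  have hpre : {x : Fin (T+1) ⊕ Unit → ℝ |
      (∀ t : Fin (T + 1), (t : ℕ) < T → x (Sum.inl t) < x (Sum.inr ())) ∧
        x (Sum.inr ()) ≤ x (Sum.inl (Fin.last T))}
      = (MeasurableEquiv.sumPiEquivProdPi (fun _ : Fin (T+1) ⊕ Unit => ℝ)) ⁻¹' S' := rfl
  rw [hpre, MeasurePreserving.measure_preimage_equiv
    (measurePreserving_sumPiEquivProdPi (fun _ : Fin (T+1) ⊕ Unit => mu)) S']
  rw [Measure.prod_apply_symm hS']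
  -- slice computation
  have hslice : ∀ y : Unit → ℝ, (fun x => (x, y)) ⁻¹' S' =
      Set.pi Set.univ (fun t : Fin (T+1) =>
        if (t:ℕ) < T then Set.Iio (y ()) else Set.Ici (y ())) := by
    intro y
    ext x
    simp only [hS'def, Set.mem_preimage, Set.mem_setOf_eq, Set.mem_pi, Set.mem_univ,
      forall_true_left]
    constructor
    · rintro ⟨h1, h2⟩ t
      by_cases ht : (t:ℕ) < T
      · simpa [ht] using h1 t ht
      · have hlast : t = Fin.last T := by
          apply Fin.ext; have := t.isLt; simp [Fin.last]; omega
        simpa [ht, hlast] using h2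
    · intro h
      constructor
      · intro t ht; simpa [ht] using h t
      · have := h (Fin.last T); simpa [Fin.last] using this
  have hval : ∀ y : Unit → ℝ,
      (Measure.pi fun _ : Fin (T+1) => mu) ((fun x => (x, y)) ⁻¹' S')
        = mu (Set.Iio (y ())) ^ T * mu (Set.Ici (y ())) := by
    intro y
    rw [hslice y, Measure.pi_pi]
    rw [Fin.prod_univ_castSucc]
    have h1 : ∀ t : Fin T, ((Fin.castSucc t : Fin (T+1)) : ℕ) < T := fun t => t.isLt
    have h2 : ¬ ((Fin.last T : Fin (T+1)) : ℕ) < T := by simp [Fin.last]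
    rw [if_neg h2]
    congr 1
    rw [show (∏ t : Fin T, mu (if ((Fin.castSucc t : Fin (T+1)) : ℕ) < T
          then Set.Iio (y ()) else Set.Ici (y ())))
        = ∏ _t : Fin T, mu (Set.Iio (y ())) from
      Finset.prod_congr rfl fun t _ => by rw [if_pos (h1 t)]]
    rw [Finset.prod_const, Finset.card_univ, Fintype.card_fin]
  simp_rw [hval]
  have hmp : (∫⁻ (y : Unit → ℝ), mu (Set.Iio (y ())) ^ T * mu (Set.Ici (y ()))
        ∂Measure.pi fun _ : Unit => mu)
      = ∫⁻ y : ℝ, mu (Set.Iio y) ^ T * mu (Set.Ici y) ∂mu :=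
    ((measurePreserving_piUnique (fun _ : Unit => mu)).lintegral_map_equiv
      (fun y : ℝ => mu (Set.Iio y) ^ T * mu (Set.Ici y))).symm
  rw [hmp]
  have hcongr : (∫⁻ y : ℝ, mu (Set.Iio y) ^ T * mu (Set.Ici y) ∂mu)
      = ∫⁻ y in Set.Icc (0:ℝ) 1, ENNReal.ofReal (y ^ T * (1 - y)) := by
    rw [mu_def]
    refine setLIntegral_congr_fun measurableSet_Icc (fun y hy => ?_)
    rw [mu_Iio hy.1 hy.2, mu_Ici hy.1 hy.2, ← ENNReal.ofReal_pow hy.1,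
      ← ENNReal.ofReal_mul (pow_nonneg hy.1 T)]
  rw [hcongr]
  have hint : IntegrableOn (fun y : ℝ => y ^ T * (1 - y)) (Set.Icc (0:ℝ) 1) volume :=
    Continuous.integrableOn_Icc (by continuity)
  have hnn : 0 ≤ᵐ[volume.restrict (Set.Icc (0:ℝ) 1)] fun y : ℝ => y ^ T * (1 - y) :=
    (ae_restrict_iff' measurableSet_Icc).2 (ae_of_all _ fun y hy =>
      mul_nonneg (pow_nonneg hy.1 T) (by linarith [hy.2]))
  rw [← ofReal_integral_eq_lintegral_ofReal hint hnn, integral_pow_one_sub T]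

/-- Threshold-of-instability model with uniform densities at η = 1: if `X₀,…,X_T` are
i.i.d. uniform on `[0,1]` and `Y` is uniform on `[0,1]`, all mutually independent, then
the probability that `X_t < Y` for all `t < T` and `X_T ≥ Y` equals
`1/((T+1)(T+2))` — a power-law tail with exponent `-2`. -/
theorem stmt_4 {Ω : Type*} [MeasurableSpace Ω] (P : Measure Ω) [IsProbabilityMeasure P]
    (T : ℕ) (X : Fin (T + 1) → Ω → ℝ) (Y : Ω → ℝ)
    (hX : ∀ t, Measurable (X t)) (hY : Measurable Y)
    (hXlaw : ∀ t, P.map (X t) = volume.restrict (Set.Icc (0:ℝ) 1))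
    (hYlaw : P.map Y = volume.restrict (Set.Icc (0:ℝ) 1))
    (hindep : iIndepFun (Sum.elim X (fun _ : Unit => Y)) P) :
    (P {ω | (∀ t : Fin (T + 1), (t : ℕ) < T → X t ω < Y ω) ∧
        Y ω ≤ X (Fin.last T) ω}).toReal
      = 1 / ((T + 1) * (T + 2)) := by
  have hf : ∀ i : Fin (T+1) ⊕ Unit, Measurable (Sum.elim X (fun _ : Unit => Y) i) := by
    rintro (t | u)
    exacts [hX t, hY]
  have hlaw : ∀ i, P.map (Sum.elim X (fun _ : Unit => Y) i) = mu := by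
    rintro (t | u)
    exacts [hXlaw t, hYlaw]
  have hmap := joint_law P _ hf hlaw hindep
  have hZ : Measurable (fun ω i => Sum.elim X (fun _ : Unit => Y) i ω) :=
    measurable_pi_lambda _ hf
  set S : Set (Fin (T+1) ⊕ Unit → ℝ) :=
    {x | (∀ t : Fin (T + 1), (t : ℕ) < T → x (Sum.inl t) < x (Sum.inr ())) ∧
      x (Sum.inr ()) ≤ x (Sum.inl (Fin.last T))} with hSdef
  have hS : MeasurableSet S := by
    have h : S = (⋂ t : Fin (T+1), ⋂ _ : (t:ℕ) < T,
        {x : Fin (T+1) ⊕ Unit → ℝ | x (Sum.inl t) < x (Sum.inr ())})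
        ∩ {x | x (Sum.inr ()) ≤ x (Sum.inl (Fin.last T))} := by
      ext x; simp [hSdef, Set.mem_iInter]
    rw [h]
    apply MeasurableSet.inter
    · refine MeasurableSet.iInter fun t => MeasurableSet.iInter fun _ => ?_
      exact measurableSet_lt (by fun_prop) (by fun_prop)
    · exact measurableSet_le (by fun_prop) (by fun_prop)
  have hev : {ω | (∀ t : Fin (T + 1), (t : ℕ) < T → X t ω < Y ω) ∧
      Y ω ≤ X (Fin.last T) ω} = (fun ω i => Sum.elim X (fun _ : Unit => Y) i ω) ⁻¹' S := rfl
  rw [hev, ← Measure.map_apply hZ hS, hmap, hSdef, pi_measure_S T,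
    ENNReal.toReal_ofReal (by positivity)]
end

section
/- Let α > −1, β > −1 and define P(T) = Γ(2+β)·Γ(1+T(1+α)) / Γ(2+β+T(1+α)) − Γ(2+β)·Γ(1+(T+1)(1+α)) / Γ(2+β+(T+1)(1+α)) for natural numbers T ≥ 1. Then T^{2+β} · P(T) converges, as T → ∞, to (1+β)·Γ(2+β)·(1+α)^{−1−β}; equivalently P(T) is asymptotically equivalent to (1+β)Γ(2+β)(1+α)^{−1−β} / T^{2+β}. In particular the decay exponent −(2+β) depends only on the threshold distribution exponent β and is independent of the state-distribution exponent α. -/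
open Real Filter Topology MeasureTheory

lemma gautschi_upper {x s : ℝ} (hx : 0 < x) (hs0 : 0 < s) (hs1 : s ≤ 1) :
    Real.Gamma (x + s) ≤ Real.Gamma x * x ^ s := by
  have h := Real.convexOn_log_Gamma.2 (Set.mem_Ioi.2 hx) (Set.mem_Ioi.2 (by linarith : (0:ℝ) < x + 1))
      (by linarith : (0:ℝ) ≤ 1 - s) hs0.le (by ring)
  have hcomb : (1 - s) • x + s • (x + 1) = x + s := by simp; ring
  rw [hcomb] at h
  have hgx : 0 < Real.Gamma x := Real.Gamma_pos_of_pos hx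
  have hgxs : 0 < Real.Gamma (x + s) := Real.Gamma_pos_of_pos (by linarith)
  have h1 : Real.Gamma (x + 1) = x * Real.Gamma x := Real.Gamma_add_one hx.ne'
  simp only [Function.comp_apply, smul_eq_mul] at h
  have : Real.log (Real.Gamma (x + s)) ≤ Real.log (Real.Gamma x * x ^ s) := by
    rw [Real.log_mul hgx.ne' (Real.rpow_pos_of_pos hx s).ne', Real.log_rpow hx]
    calc Real.log (Real.Gamma (x + s)) ≤ (1 - s) * Real.log (Real.Gamma x) + s * Real.log (Real.Gamma (x + 1)) := h
    _ = Real.log (Real.Gamma x) + s * Real.log x := by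
        rw [h1, Real.log_mul hx.ne' hgx.ne']; ring
  exact (Real.log_le_log_iff hgxs (by positivity)).mp this

lemma gautschi_lower {x s : ℝ} (hx : 0 < x) (hs0 : 0 < s) (hs1 : s ≤ 1) :
    x * Real.Gamma x ≤ Real.Gamma (x + s) * (x + s) ^ (1 - s) := by
  have h := Real.convexOn_log_Gamma.2 (Set.mem_Ioi.2 (by linarith : (0:ℝ) < x + s))
      (Set.mem_Ioi.2 (by linarith : (0:ℝ) < x + s + 1))
      hs0.le (by linarith : (0:ℝ) ≤ 1 - s) (by ring)
  have hcomb : s • (x + s) + (1 - s) • (x + s + 1) = x + 1 := by simp; ring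
  rw [hcomb] at h
  have hgx : 0 < Real.Gamma x := Real.Gamma_pos_of_pos hx
  have hgxs : 0 < Real.Gamma (x + s) := Real.Gamma_pos_of_pos (by linarith)
  have h1 : Real.Gamma (x + 1) = x * Real.Gamma x := Real.Gamma_add_one hx.ne'
  have h2 : Real.Gamma (x + s + 1) = (x + s) * Real.Gamma (x + s) :=
    Real.Gamma_add_one (by positivity)
  simp only [Function.comp_apply, smul_eq_mul] at h
  have hlog : Real.log (x * Real.Gamma x) ≤ Real.log (Real.Gamma (x + s) * (x + s) ^ (1 - s)) := by
    rw [← h1]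
    rw [Real.log_mul hgxs.ne' (Real.rpow_pos_of_pos (by linarith) _).ne', Real.log_rpow (by linarith)]
    calc Real.log (Real.Gamma (x + 1))
        ≤ s * Real.log (Real.Gamma (x + s)) + (1 - s) * Real.log (Real.Gamma (x + s + 1)) := h
      _ = Real.log (Real.Gamma (x + s)) + (1 - s) * Real.log (x + s) := by
          rw [h2, Real.log_mul (by positivity) hgxs.ne']; ring
  exact (Real.log_le_log_iff (by positivity) (by positivity)).mp hlog

lemma ratio_base {s : ℝ} (hs0 : 0 < s) (hs1 : s ≤ 1) :
    Tendsto (fun x : ℝ => x ^ s * Real.Gamma x / Real.Gamma (x + s)) atTop (𝓝 1) := by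
  have hub : Tendsto (fun x : ℝ => (1 + s / x) ^ (1 - s)) atTop (𝓝 1) := by
    have h0 : Tendsto (fun x : ℝ => s / x) atTop (𝓝 0) :=
      tendsto_const_nhds.div_atTop tendsto_id
    have h1 : Tendsto (fun x : ℝ => 1 + s / x) atTop (𝓝 (1 + 0)) :=
      Tendsto.add tendsto_const_nhds h0
    rw [add_zero] at h1
    have := (Real.continuousAt_rpow_const 1 (1 - s) (Or.inl one_ne_zero)).tendsto.comp h1
    rwa [Real.one_rpow] at this
  refine tendsto_of_tendsto_of_tendsto_of_le_of_le' tendsto_const_nhds hub ?_ ?_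
  · filter_upwards [eventually_gt_atTop (0:ℝ)] with x hx
    have hgxs : 0 < Real.Gamma (x + s) := Real.Gamma_pos_of_pos (by linarith)
    rw [le_div_iff₀ hgxs, one_mul]
    calc Real.Gamma (x + s) ≤ Real.Gamma x * x ^ s := gautschi_upper hx hs0 hs1
      _ = x ^ s * Real.Gamma x := mul_comm _ _
  · filter_upwards [eventually_gt_atTop (0:ℝ)] with x hx
    have hgx : 0 < Real.Gamma x := Real.Gamma_pos_of_pos hx
    have hxs : (0:ℝ) < x + s := by linarith
    have hgxs : 0 < Real.Gamma (x + s) := Real.Gamma_pos_of_pos hxs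
    rw [div_le_iff₀ hgxs]
    have key : x * Real.Gamma x ≤ Real.Gamma (x + s) * (x + s) ^ (1 - s) :=
      gautschi_lower hx hs0 hs1
    have e0 : x ^ s = x ^ (1:ℝ) * x ^ (s - 1) := by
      rw [← Real.rpow_add hx]; norm_num
    have e1 : x ^ s * Real.Gamma x = (x * Real.Gamma x) * x ^ (s - 1) := by
      rw [e0, Real.rpow_one]; ring
    have e2 : (x + s) ^ (1 - s) * x ^ (s - 1) = (1 + s / x) ^ (1 - s) := by
      rw [show (1 + s / x) = (x + s) / x by field_simp,
        Real.div_rpow (by linarith) hx.le,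
        show x ^ (s - 1) = (x ^ (1 - s))⁻¹ by
          rw [← Real.rpow_neg hx.le]; congr 1; ring]
      rw [div_eq_mul_inv]
    calc x ^ s * Real.Gamma x = (x * Real.Gamma x) * x ^ (s - 1) := e1
      _ ≤ (Real.Gamma (x + s) * (x + s) ^ (1 - s)) * x ^ (s - 1) :=
          mul_le_mul_of_nonneg_right key (Real.rpow_nonneg hx.le _)
      _ = (1 + s / x) ^ (1 - s) * Real.Gamma (x + s) := by
          rw [mul_assoc, e2]; ring

lemma aux_div_tendsto (d : ℝ) : Tendsto (fun x : ℝ => x / (x + d)) atTop (𝓝 1) := by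
  have h0 : Tendsto (fun x : ℝ => d / x) atTop (𝓝 0) :=
    tendsto_const_nhds.div_atTop tendsto_id
  have h1 : Tendsto (fun x : ℝ => 1 + d / x) atTop (𝓝 (1 + 0)) :=
    Tendsto.add tendsto_const_nhds h0
  rw [add_zero] at h1
  have h2 := h1.inv₀ (by norm_num)
  rw [inv_one] at h2
  refine h2.congr' ?_
  filter_upwards [eventually_gt_atTop 0, eventually_gt_atTop (-d)] with x hx hx'
  rw [eq_comm]
  rw [show (1 + d / x) = (x + d) / x by field_simp]
  rw [inv_div]

lemma ratio_tendsto {a : ℝ} (ha : 0 < a) :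
    Tendsto (fun x : ℝ => x ^ a * Real.Gamma x / Real.Gamma (x + a)) atTop (𝓝 1) := by
  have key : ∀ n : ℕ, ∀ s : ℝ, 0 < s → s ≤ 1 →
      Tendsto (fun x : ℝ => x ^ (s + n) * Real.Gamma x / Real.Gamma (x + (s + n))) atTop (𝓝 1) := by
    intro n
    induction n with
    | zero => intro s hs0 hs1; simpa using ratio_base hs0 hs1
    | succ n ih =>
      intro s hs0 hs1
      have h2 := aux_div_tendsto (s + n)
      have h3 := (ih s hs0 hs1).mul h2
      rw [mul_one] at h3
      refine h3.congr' ?_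
      filter_upwards [eventually_gt_atTop 0] with x hx
      have hxsn : (0:ℝ) < x + (s + n) := by positivity
      have hg : Real.Gamma (x + (s + ↑(n + 1))) = (x + (s + n)) * Real.Gamma (x + (s + n)) := by
        rw [show x + (s + ↑(n + 1)) = (x + (s + n)) + 1 by push_cast; ring]
        exact Real.Gamma_add_one hxsn.ne'
      have hpow : x ^ (s + ↑(n + 1)) = x ^ (s + n) * x := by
        rw [show s + ↑(n + 1) = (s + n) + 1 by push_cast; ring, Real.rpow_add hx,
          Real.rpow_one]
      have hgpos : 0 < Real.Gamma (x + (s + n)) := Real.Gamma_pos_of_pos hxsn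
      rw [hg, hpow]
      field_simp
  have hn1 : 1 ≤ ⌈a⌉₊ := Nat.one_le_iff_ne_zero.mpr (Nat.ceil_pos.mpr ha).ne'
  set n : ℕ := ⌈a⌉₊ - 1 with hn
  have hcast : (n : ℝ) = (⌈a⌉₊ : ℝ) - 1 := by
    rw [hn, Nat.cast_sub hn1, Nat.cast_one]
  have hs1 : a - n ≤ 1 := by
    have := Nat.le_ceil a
    rw [hcast]; linarith
  have hs0 : 0 < a - n := by
    have := Nat.ceil_lt_add_one ha.le
    rw [hcast]; linarith
  have := key n (a - n) hs0 hs1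
  simpa using this

lemma beta_eq_ofReal {a b : ℝ} (x : ℝ) (hx0 : 0 ≤ x) (hx1 : x ≤ 1) :
    ((x:ℂ) ^ ((a:ℂ) - 1) * (1 - (x:ℂ)) ^ ((b:ℂ) - 1)) =
      ((x ^ (a - 1) * (1 - x) ^ (b - 1) : ℝ) : ℂ) := by
  rw [Complex.ofReal_mul, Complex.ofReal_cpow hx0, Complex.ofReal_cpow (by linarith)]
  push_cast
  ring_nf

lemma real_beta {a b : ℝ} (ha : 0 < a) (hb : 0 < b) :
    ∫ t in (0:ℝ)..1, t ^ (a - 1) * (1 - t) ^ (b - 1) =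
      Real.Gamma a * Real.Gamma b / Real.Gamma (a + b) := by
  have h := Complex.Gamma_mul_Gamma_eq_betaIntegral (s := (a:ℂ)) (t := (b:ℂ))
    (by simpa using ha) (by simpa using hb)
  rw [Complex.betaIntegral] at h
  have hcongr : ∫ x : ℝ in (0:ℝ)..1, (x:ℂ) ^ ((a:ℂ) - 1) * (1 - (x:ℂ)) ^ ((b:ℂ) - 1)
      = ((∫ t in (0:ℝ)..1, t ^ (a - 1) * (1 - t) ^ (b - 1) : ℝ) : ℂ) := by
    rw [← intervalIntegral.integral_ofReal]
    refine intervalIntegral.integral_congr fun x hx => ?_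
    rw [Set.uIcc_of_le (by norm_num : (0:ℝ) ≤ 1)] at hx
    exact beta_eq_ofReal x hx.1 hx.2
  rw [hcongr] at h
  have hab : Complex.Gamma ((a:ℂ) + b) ≠ 0 := by
    rw [show ((a:ℂ) + b) = ((a + b : ℝ) : ℂ) by push_cast; ring, Complex.Gamma_ofReal]
    exact_mod_cast (Real.Gamma_pos_of_pos (by linarith)).ne'
  have h2 : ((Real.Gamma a * Real.Gamma b / Real.Gamma (a + b) : ℝ) : ℂ)
      = ((∫ t in (0:ℝ)..1, t ^ (a - 1) * (1 - t) ^ (b - 1) : ℝ) : ℂ) := by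
    rw [Complex.ofReal_div, Complex.ofReal_mul, ← Complex.Gamma_ofReal,
      ← Complex.Gamma_ofReal, ← Complex.Gamma_ofReal, Complex.ofReal_add,
      div_eq_iff hab, h]
    ring
  exact_mod_cast h2.symm

lemma beta_integrable {a b : ℝ} (ha : 0 < a) (hb : 0 < b) :
    IntervalIntegrable (fun t : ℝ => t ^ (a - 1) * (1 - t) ^ (b - 1)) volume 0 1 := by
  have h := Complex.betaIntegral_convergent (u := (a:ℂ)) (v := (b:ℂ))
    (by simpa using ha) (by simpa using hb)
  rw [intervalIntegrable_iff, Set.uIoc_of_le (by norm_num : (0:ℝ) ≤ 1)] at h ⊢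
  have h2 : MeasureTheory.IntegrableOn
      (fun x : ℝ => ((x ^ (a - 1) * (1 - x) ^ (b - 1) : ℝ) : ℂ)) (Set.Ioc 0 1) volume := by
    exact h.congr_fun (fun x hx => beta_eq_ofReal x hx.1.le hx.2) measurableSet_Ioc
  exact h2.re

lemma seq_lim {β c : ℝ} (hβ : -1 < β) (hc : 0 < c) (κ : ℝ) (hκ : 0 < κ) :
    Tendsto (fun T : ℕ => (T : ℝ) ^ (2 + β) * ((1 + β) * (c *
        (Real.Gamma ((T : ℝ) * c + κ) * Real.Gamma (2 + β)
          / Real.Gamma ((T : ℝ) * c + κ + (2 + β)))))) atTop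
      (𝓝 ((1 + β) * Real.Gamma (2 + β) * c ^ (-1 - β))) := by
  have ha : (0:ℝ) < 2 + β := by linarith
  have hx : Tendsto (fun T : ℕ => (T : ℝ) * c + κ) atTop atTop :=
    tendsto_atTop_add_const_right _ κ (tendsto_natCast_atTop_atTop.atTop_mul_const hc)
  have h1 := (ratio_tendsto ha).comp hx
  have h2 : Tendsto (fun T : ℕ => (T : ℝ) / ((T : ℝ) * c + κ)) atTop (𝓝 c⁻¹) := by
    have h0 : Tendsto (fun T : ℕ => c + κ / (T : ℝ)) atTop (𝓝 (c + 0)) :=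
      Tendsto.add tendsto_const_nhds (tendsto_const_nhds.div_atTop tendsto_natCast_atTop_atTop)
    rw [add_zero] at h0
    have h2' := h0.inv₀ hc.ne'
    refine h2'.congr' ?_
    filter_upwards [eventually_gt_atTop 0] with T hT
    have hT0 : (0:ℝ) < (T:ℝ) := by exact_mod_cast hT
    rw [inv_eq_one_div, div_eq_div_iff (by positivity) (by positivity)]
    field_simp
  have h3 : Tendsto (fun T : ℕ => ((T : ℝ) / ((T : ℝ) * c + κ)) ^ (2 + β)) atTop
      (𝓝 (c⁻¹ ^ (2 + β))) :=
    ((Real.continuousAt_rpow_const c⁻¹ (2 + β) (Or.inl (by positivity))).tendsto).comp h2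
  have h4 := (h1.mul h3).const_mul ((1 + β) * c * Real.Gamma (2 + β))
  rw [one_mul] at h4
  have hconst : (1 + β) * c * Real.Gamma (2 + β) * c⁻¹ ^ (2 + β)
      = (1 + β) * Real.Gamma (2 + β) * c ^ (-1 - β) := by
    rw [Real.inv_rpow hc.le, ← Real.rpow_neg hc.le]
    have hcc : c ^ (1:ℝ) * c ^ (-(2+β)) = c ^ (-1-β) := by
      rw [← Real.rpow_add hc, show (1:ℝ) + -(2+β) = -1-β by ring]
    calc (1 + β) * c * Real.Gamma (2+β) * c ^ (-(2+β))
        = (1 + β) * Real.Gamma (2+β) * (c ^ (1:ℝ) * c ^ (-(2+β))) := by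
          rw [Real.rpow_one]; ring
      _ = (1 + β) * Real.Gamma (2+β) * c ^ (-1-β) := by rw [hcc]
  rw [hconst] at h4
  refine h4.congr' ?_
  filter_upwards [eventually_gt_atTop 0] with T hT
  have hT0 : (0:ℝ) < (T:ℝ) := by exact_mod_cast hT
  set x := (T : ℝ) * c + κ with hxdef
  have hx0 : 0 < x := by positivity
  have hgx : 0 < Real.Gamma x := Real.Gamma_pos_of_pos hx0
  have hgxa : 0 < Real.Gamma (x + (2 + β)) := Real.Gamma_pos_of_pos (by linarith)
  have hdiv : ((T : ℝ) / x) ^ (2 + β) = (T : ℝ) ^ (2 + β) / x ^ (2 + β) :=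
    Real.div_rpow hT0.le hx0.le (2 + β)
  simp only [Function.comp_apply]
  rw [hdiv]
  have hxa : (0:ℝ) < x ^ (2 + β) := Real.rpow_pos_of_pos hx0 _
  have : Real.Gamma (x + (2+β)) = Real.Gamma (x + (2+β)) := rfl
  rw [show Real.Gamma ((T:ℝ) * c + κ + (2 + β)) = Real.Gamma (x + (2+β)) from rfl]
  field_simp
  rw [hxdef]; ring

lemma bern_upper {c t : ℝ} (hc : 1 ≤ c) (ht0 : 0 ≤ t) (ht1 : t ≤ 1) :
    1 - t ^ c ≤ c * (1 - t) := by
  have h := one_add_mul_self_le_rpow_one_add (by linarith : (-1:ℝ) ≤ t - 1) hc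
  rw [show (1:ℝ) + (t - 1) = t by ring] at h
  linarith

lemma bern_upper' {c t : ℝ} (hc0 : 0 < c) (hc : c ≤ 1) (ht0 : 0 ≤ t) (ht1 : t ≤ 1) :
    c * (1 - t) ≤ 1 - t ^ c := by
  have h := rpow_one_add_le_one_add_mul_self (by linarith : (-1:ℝ) ≤ t - 1) hc0.le hc
  rw [show (1:ℝ) + (t - 1) = t by ring] at h
  linarith

lemma bern_lower {c t : ℝ} (hc : 1 ≤ c) (ht0 : 0 < t) (ht1 : t ≤ 1) :
    c * t ^ (c - 1) * (1 - t) ≤ 1 - t ^ c := by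
  have h := one_add_mul_self_le_rpow_one_add
    (by have := one_div_pos.mpr ht0; linarith : (-1:ℝ) ≤ 1 / t - 1) hc
  rw [show (1:ℝ) + (1 / t - 1) = 1 / t by ring, one_div, Real.inv_rpow ht0.le] at h
  have hA : 0 < t ^ c := Real.rpow_pos_of_pos ht0 _
  have hBA : t ^ (c - 1) * t = t ^ c := by
    rw [← Real.rpow_add_one ht0.ne' (c - 1)]; ring_nf
  have h2 : t ^ c * (1 + c * (t⁻¹ - 1)) ≤ 1 := by
    calc t ^ c * (1 + c * (t⁻¹ - 1)) ≤ t ^ c * (t ^ c)⁻¹ :=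
          mul_le_mul_of_nonneg_left h hA.le
      _ = 1 := mul_inv_cancel₀ hA.ne'
  have hAt : t ^ c * t⁻¹ = t ^ (c - 1) := by
    field_simp [ht0.ne']
    linarith [hBA]
  nlinarith [hAt, h2, hBA]

lemma bern_lower' {c t : ℝ} (hc0 : 0 < c) (hc : c ≤ 1) (ht0 : 0 < t) (ht1 : t ≤ 1) :
    1 - t ^ c ≤ c * t ^ (c - 1) * (1 - t) := by
  have h := rpow_one_add_le_one_add_mul_self
    (by have := one_div_pos.mpr ht0; linarith : (-1:ℝ) ≤ 1 / t - 1) hc0.le hc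
  rw [show (1:ℝ) + (1 / t - 1) = 1 / t by ring, one_div, Real.inv_rpow ht0.le] at h
  have hA : 0 < t ^ c := Real.rpow_pos_of_pos ht0 _
  have hBA : t ^ (c - 1) * t = t ^ c := by
    rw [← Real.rpow_add_one ht0.ne' (c - 1)]; ring_nf
  have h2 : 1 ≤ t ^ c * (1 + c * (t⁻¹ - 1)) := by
    calc (1:ℝ) = t ^ c * (t ^ c)⁻¹ := (mul_inv_cancel₀ hA.ne').symm
      _ ≤ t ^ c * (1 + c * (t⁻¹ - 1)) := mul_le_mul_of_nonneg_left h hA.le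
  have hAt : t ^ c * t⁻¹ = t ^ (c - 1) := by
    field_simp [ht0.ne']
    linarith [hBA]
  nlinarith [hAt, h2, hBA]

lemma diff_eq {β c y t : ℝ} (ht0 : 0 < t) :
    t ^ y * (1-t) ^ β - t ^ (y+c) * (1-t) ^ β = t ^ y * (1-t) ^ β * (1 - t ^ c) := by
  rw [Real.rpow_add ht0]; ring

lemma s1_eq {β c y t : ℝ} (ht1 : t < 1) :
    c * (t ^ y * (1-t) ^ (1+β)) = t ^ y * (1-t) ^ β * (c * (1-t)) := by
  rw [Real.rpow_add (by linarith : (0:ℝ) < 1-t) 1 β, Real.rpow_one]; ring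

lemma s2_eq {β c y t : ℝ} (ht0 : 0 < t) (ht1 : t < 1) :
    c * (t ^ (y+c-1) * (1-t) ^ (1+β))
      = t ^ y * (1-t) ^ β * (c * t ^ (c-1) * (1-t)) := by
  rw [show y+c-1 = y+(c-1) by ring, Real.rpow_add ht0,
    Real.rpow_add (by linarith : (0:ℝ) < 1-t) 1 β, Real.rpow_one]; ring

lemma pw_ge {β c y : ℝ} (hβ : -1 < β) (hc : 1 ≤ c) (hcy : c ≤ y) :
    ∀ t ∈ Set.Icc (0:ℝ) 1,
      c * (t ^ (y+c-1) * (1-t) ^ (1+β)) ≤ t ^ y * (1-t) ^ β - t ^ (y+c) * (1-t) ^ β ∧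
      t ^ y * (1-t) ^ β - t ^ (y+c) * (1-t) ^ β ≤ c * (t ^ y * (1-t) ^ (1+β)) := by
  have hy : 0 < y := lt_of_lt_of_le (by linarith) hcy
  rintro t ⟨ht0, ht1⟩
  rcases eq_or_lt_of_le ht0 with h0 | h0
  · rw [← h0]
    rw [Real.zero_rpow (by linarith : (0:ℝ) < y+c-1).ne',
      Real.zero_rpow hy.ne', Real.zero_rpow (by linarith : (0:ℝ) < y+c).ne']
    norm_num
  rcases eq_or_lt_of_le ht1 with h1 | h1
  · rw [h1]
    norm_num
    rw [Real.zero_rpow (show (1:ℝ)+β ≠ 0 by intro h; exact absurd h (by linarith))]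
    norm_num
  · have hd := diff_eq (β := β) (c := c) (y := y) h0
    have hnn : (0:ℝ) ≤ t ^ y * (1-t) ^ β :=
      mul_nonneg (Real.rpow_nonneg h0.le y)
        (Real.rpow_nonneg (by linarith : (0:ℝ) ≤ 1-t) β)
    constructor
    · rw [hd, s2_eq h0 h1]
      exact mul_le_mul_of_nonneg_left (bern_lower hc h0 ht1) hnn
    · rw [hd, s1_eq h1]
      exact mul_le_mul_of_nonneg_left (bern_upper hc ht0 ht1) hnn

lemma pw_le {β c y : ℝ} (hβ : -1 < β) (hc0 : 0 < c) (hc : c ≤ 1) (hcy : c ≤ y) (hy : 0 < y) :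
    ∀ t ∈ Set.Icc (0:ℝ) 1,
      c * (t ^ y * (1-t) ^ (1+β)) ≤ t ^ y * (1-t) ^ β - t ^ (y+c) * (1-t) ^ β ∧
      t ^ y * (1-t) ^ β - t ^ (y+c) * (1-t) ^ β ≤ c * (t ^ (y+c-1) * (1-t) ^ (1+β)) := by
  rintro t ⟨ht0, ht1⟩
  rcases eq_or_lt_of_le ht0 with h0 | h0
  · rw [← h0]
    rw [Real.zero_rpow hy.ne', Real.zero_rpow (by linarith : (0:ℝ) < y+c).ne']
    norm_num
    positivity
  rcases eq_or_lt_of_le ht1 with h1 | h1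
  · rw [h1]
    norm_num
    rw [Real.zero_rpow (show (1:ℝ)+β ≠ 0 by intro h; exact absurd h (by linarith))]
    norm_num
  · have hd := diff_eq (β := β) (c := c) (y := y) h0
    have hnn : (0:ℝ) ≤ t ^ y * (1-t) ^ β :=
      mul_nonneg (Real.rpow_nonneg h0.le y)
        (Real.rpow_nonneg (by linarith : (0:ℝ) ≤ 1-t) β)
    constructor
    · rw [hd, s1_eq h1]
      exact mul_le_mul_of_nonneg_left (bern_upper' hc0 hc ht0 ht1) hnn
    · rw [hd, s2_eq h0 h1]
      exact mul_le_mul_of_nonneg_left (bern_lower' hc0 hc h0 ht1) hnn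

lemma beta_integrable' {y b : ℝ} (hy : -1 < y) (hb : -1 < b) :
    IntervalIntegrable (fun t : ℝ => t ^ y * (1 - t) ^ b) volume 0 1 := by
  have h := beta_integrable (show (0:ℝ) < 1 + y by linarith) (show (0:ℝ) < 1 + b by linarith)
  simpa using h

lemma real_beta' {y b : ℝ} (hy : -1 < y) (hb : -1 < b) :
    ∫ t in (0:ℝ)..1, t ^ y * (1 - t) ^ b
      = Real.Gamma (1 + y) * Real.Gamma (1 + b) / Real.Gamma (y + b + 2) := by
  have h := real_beta (show (0:ℝ) < 1 + y by linarith) (show (0:ℝ) < 1 + b by linarith)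
  rw [show (1+y)+(1+b) = y+b+2 by ring] at h
  simpa using h

lemma gamma_term_eq {β y : ℝ} (hβ : -1 < β) (hy : 0 < y) :
    Real.Gamma (2 + β) * Real.Gamma (1 + y) / Real.Gamma (2 + β + y)
      = (1 + β) * ∫ t in (0:ℝ)..1, t ^ y * (1 - t) ^ β := by
  rw [real_beta' (by linarith) hβ]
  have h2 : Real.Gamma (2 + β) = (1 + β) * Real.Gamma (1 + β) := by
    rw [show (2 + β) = (1 + β) + 1 by ring, Real.Gamma_add_one (by linarith : (1:ℝ) + β ≠ 0)]
  rw [h2, show 2 + β + y = y + β + 2 by ring]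
  ring

lemma bound_eq {β c : ℝ} (hβ : -1 < β) (hc : 0 ≤ c) (q κ y : ℝ) (hq : -1 < q)
    (hqκ : 1 + q = y + κ) (hd : q + (1 + β) + 2 = y + κ + (2 + β)) :
    ∫ t in (0:ℝ)..1, c * (t ^ q * (1-t) ^ (1+β))
      = c * (Real.Gamma (y + κ) * Real.Gamma (2 + β) / Real.Gamma (y + κ + (2 + β))) := by
  rw [intervalIntegral.integral_const_mul, real_beta' hq (by linarith),
    show (1:ℝ) + (1+β) = 2+β by ring, hqκ, hd]


/-- For `α > -1`, `β > -1`, the quenched-threshold quiescent-time distribution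
`P(T) = Γ(2+β)Γ(1+T(1+α))/Γ(2+β+T(1+α)) - Γ(2+β)Γ(1+(T+1)(1+α))/Γ(2+β+(T+1)(1+α))`
satisfies `T^{2+β} · P(T) → (1+β)Γ(2+β)(1+α)^{-1-β}` as `T → ∞`; the decay exponent
`-(2+β)` depends only on the threshold exponent `β`. -/
theorem stmt_6 (α β : ℝ) (hα : -1 < α) (hβ : -1 < β)
    (P : ℕ → ℝ)
    (hP : ∀ T : ℕ, 1 ≤ T →
      P T = Real.Gamma (2 + β) * Real.Gamma (1 + (T : ℝ) * (1 + α))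
          / Real.Gamma (2 + β + (T : ℝ) * (1 + α))
        - Real.Gamma (2 + β) * Real.Gamma (1 + ((T : ℝ) + 1) * (1 + α))
          / Real.Gamma (2 + β + ((T : ℝ) + 1) * (1 + α))) :
    Tendsto (fun T : ℕ => (T : ℝ) ^ (2 + β) * P T) atTop
      (𝓝 ((1 + β) * Real.Gamma (2 + β) * (1 + α) ^ (-1 - β))) := by
  set c := 1 + α with hcdef
  have hc : 0 < c := by rw [hcdef]; linarith
  have key : ∀ T : ℕ, 1 ≤ T →
      P T = (1 + β) * ∫ t in (0:ℝ)..1,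
        (t ^ ((T:ℝ)*c) * (1-t) ^ β - t ^ ((T:ℝ)*c + c) * (1-t) ^ β) := by
    intro T hT
    have hT1 : (1:ℝ) ≤ (T:ℝ) := by exact_mod_cast hT
    have hy0 : 0 < (T:ℝ)*c := by positivity
    have hyc0 : 0 < (T:ℝ)*c + c := by positivity
    have i1 : IntervalIntegrable (fun t : ℝ => t ^ ((T:ℝ)*c) * (1-t) ^ β) volume 0 1 :=
      beta_integrable' (by linarith) hβ
    have i2 : IntervalIntegrable (fun t : ℝ => t ^ ((T:ℝ)*c + c) * (1-t) ^ β) volume 0 1 :=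
      beta_integrable' (by linarith) hβ
    rw [hP T hT, show ((T:ℝ)+1)*c = (T:ℝ)*c + c by ring,
      show (2:ℝ)+β+((T:ℝ)*c+c) = 2+β+((T:ℝ)*c+c) from rfl,
      mul_div_assoc, mul_div_assoc, ← mul_div_assoc, ← mul_div_assoc,
      gamma_term_eq hβ hy0, gamma_term_eq hβ hyc0,
      ← mul_sub, ← intervalIntegral.integral_sub i1 i2]
  have hTnn : ∀ T : ℕ, (0:ℝ) ≤ (T:ℝ) ^ (2+β) :=
    fun T => Real.rpow_nonneg (Nat.cast_nonneg T) _
  have hβ1 : (0:ℝ) ≤ 1 + β := by linarith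
  rcases le_or_gt 1 c with hc1 | hc1
  · refine tendsto_of_tendsto_of_tendsto_of_le_of_le'
      (seq_lim hβ hc c hc) (seq_lim hβ hc 1 one_pos) ?_ ?_
    · filter_upwards [eventually_ge_atTop 1] with T hT
      have hT1 : (1:ℝ) ≤ (T:ℝ) := by exact_mod_cast hT
      have hcy : c ≤ (T:ℝ)*c := le_mul_of_one_le_left hc.le hT1
      have hmono : ∫ t in (0:ℝ)..1, c * (t ^ ((T:ℝ)*c + c - 1) * (1-t) ^ (1+β))
          ≤ ∫ t in (0:ℝ)..1,
            (t ^ ((T:ℝ)*c) * (1-t) ^ β - t ^ ((T:ℝ)*c + c) * (1-t) ^ β) := by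
        refine intervalIntegral.integral_mono_on (by norm_num)
          ((beta_integrable' (by linarith) (by linarith)).const_mul c)
          ((beta_integrable' (by linarith) hβ).sub (beta_integrable' (by linarith) hβ))
          (fun t ht => (pw_ge hβ hc1 hcy t ht).1)
      rw [bound_eq hβ hc.le _ c ((T:ℝ)*c) (by linarith) (by ring) (by ring)] at hmono
      rw [key T hT]
      calc (T:ℝ) ^ (2+β) * ((1+β) * (c * (Real.Gamma ((T:ℝ)*c + c) * Real.Gamma (2+β)
            / Real.Gamma ((T:ℝ)*c + c + (2+β)))))
          ≤ (T:ℝ) ^ (2+β) * ((1+β) * ∫ t in (0:ℝ)..1,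
            (t ^ ((T:ℝ)*c) * (1-t) ^ β - t ^ ((T:ℝ)*c + c) * (1-t) ^ β)) :=
            mul_le_mul_of_nonneg_left (mul_le_mul_of_nonneg_left hmono hβ1) (hTnn T)
        _ = _ := rfl
    · filter_upwards [eventually_ge_atTop 1] with T hT
      have hT1 : (1:ℝ) ≤ (T:ℝ) := by exact_mod_cast hT
      have hcy : c ≤ (T:ℝ)*c := le_mul_of_one_le_left hc.le hT1
      have hmono : ∫ t in (0:ℝ)..1,
            (t ^ ((T:ℝ)*c) * (1-t) ^ β - t ^ ((T:ℝ)*c + c) * (1-t) ^ β)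
          ≤ ∫ t in (0:ℝ)..1, c * (t ^ ((T:ℝ)*c) * (1-t) ^ (1+β)) := by
        refine intervalIntegral.integral_mono_on (by norm_num)
          ((beta_integrable' (by linarith) hβ).sub (beta_integrable' (by linarith) hβ))
          ((beta_integrable' (by linarith) (by linarith)).const_mul c)
          (fun t ht => (pw_ge hβ hc1 hcy t ht).2)
      rw [bound_eq hβ hc.le _ 1 ((T:ℝ)*c) (by linarith) (by ring) (by ring)] at hmono
      rw [key T hT]
      exact mul_le_mul_of_nonneg_left (mul_le_mul_of_nonneg_left hmono hβ1) (hTnn T)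
  · refine tendsto_of_tendsto_of_tendsto_of_le_of_le'
      (seq_lim hβ hc 1 one_pos) (seq_lim hβ hc c hc) ?_ ?_
    · filter_upwards [eventually_ge_atTop 1] with T hT
      have hT1 : (1:ℝ) ≤ (T:ℝ) := by exact_mod_cast hT
      have hcy : c ≤ (T:ℝ)*c := le_mul_of_one_le_left hc.le hT1
      have hy0 : 0 < (T:ℝ)*c := by positivity
      have hmono : ∫ t in (0:ℝ)..1, c * (t ^ ((T:ℝ)*c) * (1-t) ^ (1+β))
          ≤ ∫ t in (0:ℝ)..1,
            (t ^ ((T:ℝ)*c) * (1-t) ^ β - t ^ ((T:ℝ)*c + c) * (1-t) ^ β) := by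
        refine intervalIntegral.integral_mono_on (by norm_num)
          ((beta_integrable' (by linarith) (by linarith)).const_mul c)
          ((beta_integrable' (by linarith) hβ).sub (beta_integrable' (by linarith) hβ))
          (fun t ht => (pw_le hβ hc hc1.le hcy hy0 t ht).1)
      rw [bound_eq hβ hc.le _ 1 ((T:ℝ)*c) (by linarith) (by ring) (by ring)] at hmono
      rw [key T hT]
      exact mul_le_mul_of_nonneg_left (mul_le_mul_of_nonneg_left hmono hβ1) (hTnn T)
    · filter_upwards [eventually_ge_atTop 1] with T hT
      have hT1 : (1:ℝ) ≤ (T:ℝ) := by exact_mod_cast hT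
      have hcy : c ≤ (T:ℝ)*c := le_mul_of_one_le_left hc.le hT1
      have hy0 : 0 < (T:ℝ)*c := by positivity
      have hmono : ∫ t in (0:ℝ)..1,
            (t ^ ((T:ℝ)*c) * (1-t) ^ β - t ^ ((T:ℝ)*c + c) * (1-t) ^ β)
          ≤ ∫ t in (0:ℝ)..1, c * (t ^ ((T:ℝ)*c + c - 1) * (1-t) ^ (1+β)) := by
        refine intervalIntegral.integral_mono_on (by norm_num)
          ((beta_integrable' (by linarith) hβ).sub (beta_integrable' (by linarith) hβ))
          ((beta_integrable' (by linarith) (by linarith)).const_mul c)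
          (fun t ht => (pw_le hβ hc hc1.le hcy hy0 t ht).2)
      rw [bound_eq hβ hc.le _ c ((T:ℝ)*c) (by linarith) (by ring) (by ring)] at hmono
      rw [key T hT]
      exact mul_le_mul_of_nonneg_left (mul_le_mul_of_nonneg_left hmono hβ1) (hTnn T)
end

section
/- Let 0 < η < 1. Then the equation −log(1 − η·s) = s·η/(1−η) has a unique solution s₀ in the open interval (1, 1/η), and this solution satisfies η < 1/s₀ ≤ (1+η)/2; equivalently 2/(1+η) ≤ s₀ < 1/η. In particular the exponential decay rate log(s₀) of the quiescent-time distribution vanishes like 1−η as η tends to 1. -/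
/-- Derivative of the auxiliary function for the artanh bound. -/
lemma phi_hasDeriv (y : ℝ) (h0 : -1 < y) (h1 : y < 1) :
    HasDerivAt (fun y : ℝ => 2 * y / (1 - y ^ 2) - (Real.log (1 + y) - Real.log (1 - y)))
      (4 * y ^ 2 / (1 - y ^ 2) ^ 2) y := by
  have hden : (1 - y ^ 2) ≠ 0 := by nlinarith
  have h1y : (1 + y) ≠ 0 := by linarith
  have h2y : (1 - y) ≠ 0 := by linarith
  have hnum : HasDerivAt (fun y : ℝ => 2 * y) 2 y := by
    simpa using (hasDerivAt_id y).const_mul (2 : ℝ)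
  have hd : HasDerivAt (fun y : ℝ => 1 - y ^ 2) (-(2 * y)) y := by
    simpa using (hasDerivAt_pow 2 y).const_sub (1:ℝ)
  have hA : HasDerivAt (fun y : ℝ => 2 * y / (1 - y ^ 2))
      ((2 * (1 - y ^ 2) - 2 * y * -(2 * y)) / (1 - y ^ 2) ^ 2) y := hnum.div hd hden
  have hB : HasDerivAt (fun y : ℝ => Real.log (1 + y)) (1 / (1 + y)) y := by
    have h : HasDerivAt (fun y : ℝ => 1 + y) 1 y := by
      simpa using (hasDerivAt_id y).const_add (1:ℝ)
    simpa using h.log h1y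
  have hC : HasDerivAt (fun y : ℝ => Real.log (1 - y)) (-1 / (1 - y)) y := by
    have h : HasDerivAt (fun y : ℝ => 1 - y) (-1) y := by
      simpa using (hasDerivAt_id y).const_sub (1:ℝ)
    simpa using h.log h2y
  refine (hA.sub (hB.sub hC)).congr_deriv ?_
  field_simp
  ring

/-- The artanh-type inequality `log(1+x) - log(1-x) ≤ 2x/(1-x²)` for `0 ≤ x < 1`. -/
lemma aux_log_bound (x : ℝ) (h0 : 0 ≤ x) (h1 : x < 1) :
    Real.log (1 + x) - Real.log (1 - x) ≤ 2 * x / (1 - x ^ 2) := by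
  set φ : ℝ → ℝ := fun y => 2 * y / (1 - y ^ 2) - (Real.log (1 + y) - Real.log (1 - y)) with hφ
  have hmono : MonotoneOn φ (Set.Ico (0 : ℝ) 1) := by
    have hcont : ContinuousOn φ (Set.Ico (0 : ℝ) 1) := by
      intro y hy
      obtain ⟨hy0, hy1⟩ := hy
      exact ((phi_hasDeriv y (by linarith) hy1).continuousAt).continuousWithinAt
    have hint : interior (Set.Ico (0 : ℝ) 1) = Set.Ioo (0 : ℝ) 1 := interior_Ico
    apply monotoneOn_of_deriv_nonneg (convex_Ico 0 1) hcont
    · rw [hint]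
      intro y hy
      exact (phi_hasDeriv y (by linarith [hy.1]) hy.2).differentiableAt.differentiableWithinAt
    · rw [hint]
      intro y hy
      rw [(phi_hasDeriv y (by linarith [hy.1]) hy.2).deriv]
      positivity
  have h0mem : (0 : ℝ) ∈ Set.Ico (0 : ℝ) 1 := by constructor <;> norm_num
  have hxmem : x ∈ Set.Ico (0 : ℝ) 1 := ⟨h0, h1⟩
  have := hmono h0mem hxmem h0
  have hφ0 : φ 0 = 0 := by simp [hφ]
  rw [hφ0] at this
  simpa [hφ] using this

/-- For `0 < η < 1`, the equation `-log(1 - ηs) = sη/(1-η)` has a unique solution `s₀`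
in the open interval `(1, 1/η)`, and it satisfies `2/(1+η) ≤ s₀ < 1/η` (equivalently
`η < 1/s₀ ≤ (1+η)/2`); hence the exponential decay rate `log s₀` of the quiescent-time
distribution vanishes like `1-η` as `η → 1`. -/
theorem stmt_8 (η : ℝ) (hη0 : 0 < η) (hη1 : η < 1) :
    ∃ s₀ : ℝ, (s₀ ∈ Set.Ioo 1 (1 / η) ∧ -Real.log (1 - η * s₀) = s₀ * η / (1 - η)) ∧
      (∀ s ∈ Set.Ioo (1 : ℝ) (1 / η),
        -Real.log (1 - η * s) = s * η / (1 - η) → s = s₀) ∧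
      2 / (1 + η) ≤ s₀ ∧ s₀ < 1 / η := by
  have h1η : (0 : ℝ) < 1 - η := by linarith
  set G : ℝ → ℝ := fun s => -Real.log (1 - η * s) - s * η / (1 - η) with hG
  -- positivity of 1 - η s on the domain
  have hpos : ∀ s : ℝ, s < 1 / η → 0 < 1 - η * s := by
    intro s hs
    have : η * s < 1 := by
      calc η * s < η * (1 / η) := by exact mul_lt_mul_of_pos_left hs hη0
      _ = 1 := by field_simp
    linarith
  -- derivative of G
  have hderiv : ∀ s : ℝ, s < 1 / η →
      HasDerivAt G (η / (1 - η * s) - η / (1 - η)) s := by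
    intro s hs
    have hne : (1 - η * s) ≠ 0 := ne_of_gt (hpos s hs)
    have hlin : HasDerivAt (fun s : ℝ => 1 - η * s) (-η) s := by
      simpa using ((hasDerivAt_id s).const_mul η).const_sub (1:ℝ)
    have hlog : HasDerivAt (fun s : ℝ => Real.log (1 - η * s)) (-η / (1 - η * s)) s :=
      hlin.log hne
    have hlin2 : HasDerivAt (fun s : ℝ => s * η / (1 - η)) (η / (1 - η)) s := by
      have : HasDerivAt (fun s : ℝ => s * (η / (1 - η))) (η / (1 - η)) s := by
        simpa using (hasDerivAt_id s).mul_const (η / (1 - η))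
      convert this using 2 with t
      ring
    refine ((hlog.neg).sub hlin2).congr_deriv ?_
    field_simp
  -- continuity of G
  have hcont : ContinuousOn G (Set.Ico (1 : ℝ) (1 / η)) := by
    intro s hs
    exact ((hderiv s hs.2).continuousAt).continuousWithinAt
  -- strict monotonicity of G on [1, 1/η)
  have hmono : StrictMonoOn G (Set.Ico (1 : ℝ) (1 / η)) := by
    apply strictMonoOn_of_deriv_pos (convex_Ico 1 (1 / η)) hcont
    rw [interior_Ico]
    intro s hs
    rw [(hderiv s hs.2).deriv]
    have h1 : 0 < 1 - η * s := hpos s hs.2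
    have h2 : 1 - η * s < 1 - η := by nlinarith [hs.1]
    have : η / (1 - η) < η / (1 - η * s) := by
      apply div_lt_div_of_pos_left hη0 h1 h2
    linarith
  -- G 1 < 0
  have hG1 : G 1 < 0 := by
    have hlt : Real.log (1 / (1 - η)) < 1 / (1 - η) - 1 := by
      apply Real.log_lt_sub_one_of_pos (by positivity)
      intro h
      have : 1 - η = 1 := by
        field_simp at h
        linarith
      linarith
    have hloginv : Real.log (1 / (1 - η)) = -Real.log (1 - η) := by
      rw [one_div, Real.log_inv]
    rw [hloginv] at hlt
    have : 1 / (1 - η) - 1 = η / (1 - η) := by field_simp; ring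
    rw [this] at hlt
    simp only [hG, mul_one, one_mul]
    linarith
  -- the point s* where G is positive
  set E : ℝ := Real.exp (-(1 / (1 - η))) with hE
  have hE0 : 0 < E := Real.exp_pos _
  have hE1 : E < 1 - η := by
    have h2 : -Real.log (1 - η) ≤ (1 - η)⁻¹ - 1 := by
      have := Real.log_le_sub_one_of_pos (x := (1 - η)⁻¹) (by positivity)
      rw [Real.log_inv] at this
      linarith
    have hexp : Real.exp (-(1 / (1 - η))) < Real.exp (Real.log (1 - η)) := by
      apply Real.exp_lt_exp.mpr
      rw [one_div]
      linarith
    rw [Real.exp_log h1η] at hexp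
    exact hexp
  set sstar : ℝ := (1 - E) / η with hsstar
  have hsstar_lt : sstar < 1 / η := by
    rw [hsstar]
    exact div_lt_div_of_pos_right (by linarith) hη0
  have hsstar_gt : 1 < sstar := by
    rw [hsstar, lt_div_iff₀ hη0]
    linarith
  have hηsstar : 1 - η * sstar = E := by
    rw [hsstar]
    field_simp
    ring
  have hGsstar : 0 < G sstar := by
    simp only [hG]
    rw [hηsstar, hE, Real.log_exp]
    have hs1 : η * sstar < 1 := by
      have := hpos sstar hsstar_lt
      linarith
    have : sstar * η / (1 - η) < 1 / (1 - η) := by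
      apply div_lt_div_of_pos_right _ h1η
      rw [mul_comm]
      linarith
    linarith
  -- intermediate value theorem on [1, sstar]
  have hIcc : Set.Icc (1 : ℝ) sstar ⊆ Set.Ico (1 : ℝ) (1 / η) := by
    intro t ht
    exact ⟨ht.1, lt_of_le_of_lt ht.2 hsstar_lt⟩
  have hivt := intermediate_value_Ioo (le_of_lt hsstar_gt) (hcont.mono hIcc)
  have h0mem : (0 : ℝ) ∈ Set.Ioo (G 1) (G sstar) := ⟨hG1, hGsstar⟩
  obtain ⟨s₀, hs₀mem, hs₀0⟩ := hivt h0mem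
  have hs₀Ioo : s₀ ∈ Set.Ioo (1 : ℝ) (1 / η) :=
    ⟨hs₀mem.1, lt_trans hs₀mem.2 hsstar_lt⟩
  have hs₀Ico : s₀ ∈ Set.Ico (1 : ℝ) (1 / η) := ⟨le_of_lt hs₀Ioo.1, hs₀Ioo.2⟩
  have hs₀eq : -Real.log (1 - η * s₀) = s₀ * η / (1 - η) := by
    have : G s₀ = 0 := hs₀0
    simp only [hG] at this
    linarith
  refine ⟨s₀, ⟨hs₀Ioo, hs₀eq⟩, ?_, ?_, hs₀Ioo.2⟩
  · -- uniqueness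
    intro s hs hseq
    have hsIco : s ∈ Set.Ico (1 : ℝ) (1 / η) := ⟨le_of_lt hs.1, hs.2⟩
    have hGs : G s = 0 := by simp only [hG]; linarith
    have : G s = G s₀ := by rw [hGs, hs₀0]
    exact hmono.injOn hsIco hs₀Ico this
  · -- lower bound 2/(1+η) ≤ s₀
    set c : ℝ := 2 / (1 + η) with hc
    have h1ηpos : (0 : ℝ) < 1 + η := by linarith
    have hc1 : 1 ≤ c := by
      rw [hc, le_div_iff₀ h1ηpos]
      linarith
    have hclt : c < 1 / η := by
      rw [hc, div_lt_div_iff₀ h1ηpos hη0]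
      nlinarith
    have hcIco : c ∈ Set.Ico (1 : ℝ) (1 / η) := ⟨hc1, hclt⟩
    have hηc : 1 - η * c = (1 - η) / (1 + η) := by
      rw [hc]; field_simp; ring
    have hGc : G c ≤ 0 := by
      simp only [hG]
      rw [hηc]
      have hlog : Real.log ((1 - η) / (1 + η)) = Real.log (1 - η) - Real.log (1 + η) :=
        Real.log_div (ne_of_gt h1η) (ne_of_gt h1ηpos)
      rw [hlog]
      have hbound := aux_log_bound η (le_of_lt hη0) hη1
      have hcval : c * η / (1 - η) = 2 * η / (1 - η ^ 2) := by
        have hne1 : (1 + η) ≠ 0 := ne_of_gt h1ηpos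
        have hne2 : (1 - η) ≠ 0 := ne_of_gt h1η
        have hne3 : (1 - η ^ 2) ≠ 0 := by nlinarith
        rw [hc]
        field_simp
        ring
      rw [hcval]
      linarith
    by_contra h
    push_neg at h
    have : G s₀ < G c := hmono hs₀Ico hcIco h
    rw [hs₀0] at this
    linarith
end

section
/- Let μ_F and μ_G be Borel probability measures on [0,1], set F(u) = μ_F([0,u)), A(n) = ∫₀¹ F(y)ⁿ dμ_G(y), B(n) = ∫₀¹ F(y)ⁿ(1−F(y)) dμ_G(y), and fix η ∈ [0,1). With the memory-η threshold process (X_t i.i.d. μ_F; Z₀ = Y₀, Z_t = Z_{t−1} with probability η and Z_t = Y_t ~ μ_G with probability 1−η, all independent) and P_η(T) the probability of {X_t < Z_t for all t < T and X_T ≥ Z_T}, one has for every T ≥ 1: P_η(T) ≤ [η·A(1) + (1−η)·A(1)·B(0)] · (η + (1−η)·A(1))^{T−1}. In particular, for any η < 1 the quiescent-time distribution is bounded above by an exponentially decaying function of T. -/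
open MeasureTheory ProbabilityTheory
open scoped ENNReal

private lemma law_lt_aux {Ω : Type*} [MeasurableSpace Ω] (P : Measure Ω) [IsProbabilityMeasure P]
    (μF μG : Measure ℝ) [IsProbabilityMeasure μF] [IsProbabilityMeasure μG]
    (hμF : μF (Set.Icc 0 1) = 1) (hμG : μG (Set.Icc 0 1) = 1)
    (X Y : Ω → ℝ) (hX : Measurable X) (hY : Measurable Y)
    (hXlaw : P.map X = μF) (hYlaw : P.map Y = μG)
    (hind : IndepFun Y X P) :
    P {ω | X ω < Y ω}
      = ENNReal.ofReal (∫ y in Set.Icc (0:ℝ) 1, (μF (Set.Ico 0 y)).toReal ∂μG) := by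
  have hμFc : μF (Set.Icc (0:ℝ) 1)ᶜ = 0 := by
    rw [measure_compl measurableSet_Icc (measure_ne_top _ _), hμF, measure_univ, tsub_self]
  have hμGc : μG (Set.Icc (0:ℝ) 1)ᶜ = 0 := by
    rw [measure_compl measurableSet_Icc (measure_ne_top _ _), hμG, measure_univ, tsub_self]
  have hIio0 : μF (Set.Iio (0:ℝ)) = 0 :=
    measure_mono_null (fun x hx => by simp only [Set.mem_compl_iff, Set.mem_Icc]; intro h; linarith [Set.mem_Iio.mp hx, h.1]) hμFc
  have hmap : P.map (fun ω => (Y ω, X ω)) = μG.prod μF := by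
    rw [(indepFun_iff_map_prod_eq_prod_map_map hY.aemeasurable hX.aemeasurable).mp hind,
      hXlaw, hYlaw]
  have hms : MeasurableSet {p : ℝ × ℝ | p.2 < p.1} :=
    measurableSet_lt measurable_snd measurable_fst
  have h1 : P {ω | X ω < Y ω} = (μG.prod μF) {p : ℝ × ℝ | p.2 < p.1} := by
    rw [← hmap, Measure.map_apply (hY.prodMk hX) hms]
    rfl
  have h2 : (μG.prod μF) {p : ℝ × ℝ | p.2 < p.1} = ∫⁻ y, μF (Set.Iio y) ∂μG := by
    rw [Measure.prod_apply hms]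
    refine lintegral_congr fun y => ?_
    congr 1
  have hrest : μG.restrict (Set.Icc (0:ℝ) 1) = μG :=
    Measure.restrict_eq_self_of_ae_mem (by rw [MeasureTheory.ae_iff]; exact hμGc)
  have h3 : ∫⁻ y, μF (Set.Iio y) ∂μG = ∫⁻ y in Set.Icc (0:ℝ) 1, μF (Set.Ico 0 y) ∂μG := by
    conv_lhs => rw [← hrest]
    refine setLIntegral_congr_fun measurableSet_Icc ?_
    intro y hy
    have h0y : (0:ℝ) ≤ y := hy.1
    have : Set.Iio y = Set.Ico 0 y ∪ Set.Iio 0 := by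
      ext x; simp only [Set.mem_Iio, Set.mem_union, Set.mem_Ico]
      constructor
      · intro h; rcases le_or_gt 0 x with h' | h'
        · exact Or.inl ⟨h', h⟩
        · exact Or.inr h'
      · rintro (⟨_, h⟩ | h); exact h; linarith
    show μF (Set.Iio y) = μF (Set.Ico 0 y)
    rw [this]
    refine le_antisymm ?_ (measure_mono Set.subset_union_left)
    calc μF (Set.Ico 0 y ∪ Set.Iio 0) ≤ μF (Set.Ico 0 y) + μF (Set.Iio 0) := measure_union_le _ _
    _ = μF (Set.Ico 0 y) := by rw [hIio0, add_zero]
  have hmono : Monotone fun y : ℝ => μF (Set.Ico 0 y) :=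
    fun _ _ h => measure_mono (Set.Ico_subset_Ico_right h)
  have hmeas : Measurable fun y : ℝ => μF (Set.Ico 0 y) := hmono.measurable
  have h4 : ∫ y in Set.Icc (0:ℝ) 1, (μF (Set.Ico 0 y)).toReal ∂μG
      = (∫⁻ y in Set.Icc (0:ℝ) 1, μF (Set.Ico 0 y) ∂μG).toReal :=
    integral_toReal hmeas.aemeasurable (Filter.Eventually.of_forall fun y => measure_lt_top _ _)
  have hfin : ∫⁻ y in Set.Icc (0:ℝ) 1, μF (Set.Ico 0 y) ∂μG ≠ ⊤ := by
    refine ne_top_of_le_ne_top ENNReal.one_ne_top ?_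
    calc ∫⁻ y in Set.Icc (0:ℝ) 1, μF (Set.Ico 0 y) ∂μG
        ≤ ∫⁻ _ in Set.Icc (0:ℝ) 1, 1 ∂μG := lintegral_mono fun y => prob_le_one
      _ = μG (Set.Icc 0 1) := by simp
      _ ≤ 1 := prob_le_one
  rw [h1, h2, h3, h4, ENNReal.ofReal_toReal hfin]

/-- Threshold-of-instability model with memory parameter `η ∈ [0,1)`: with states `X_t`
i.i.d. `μF`, candidate thresholds `Y_t` i.i.d. `μG`, Bernoulli(η) variables `ε_t`
(`{0,1}`-valued, deciding whether the threshold is kept or redrawn), all mutually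
independent, and `Z₀ = Y₀`, `Z_{t+1} = Z_t` if `ε_{t+1} = 1`, `Z_{t+1} = Y_{t+1}`
otherwise, the quiescent-time probability satisfies, for every `T ≥ 1`,
`P_η(T) ≤ (η A(1) + (1-η) A(1) B(0)) · (η + (1-η) A(1))^{T-1}`,
where `F(u) = μF([0,u))`, `A(1) = ∫₀¹ F dμG`, `B(0) = ∫₀¹ (1-F) dμG`; in particular for
any `η < 1` the quiescent-time distribution is bounded by an exponentially decaying
function of `T`. -/
theorem stmt_10 {Ω : Type*} [MeasurableSpace Ω] (P : Measure Ω) [IsProbabilityMeasure P]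
    (μF μG : Measure ℝ) [IsProbabilityMeasure μF] [IsProbabilityMeasure μG]
    (hμF : μF (Set.Icc 0 1) = 1) (hμG : μG (Set.Icc 0 1) = 1)
    (η : ℝ) (hη : η ∈ Set.Ico (0:ℝ) 1)
    (X Y ε : ℕ → Ω → ℝ)
    (hX : ∀ t, Measurable (X t)) (hY : ∀ t, Measurable (Y t)) (hε : ∀ t, Measurable (ε t))
    (hXlaw : ∀ t, P.map (X t) = μF) (hYlaw : ∀ t, P.map (Y t) = μG)
    (hεlaw : ∀ t, P.map (ε t)
      = ENNReal.ofReal η • Measure.dirac (1:ℝ) + ENNReal.ofReal (1 - η) • Measure.dirac (0:ℝ))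
    (hindep : iIndepFun (Sum.elim X (Sum.elim Y ε)) P)
    (Z : ℕ → Ω → ℝ)
    (hZ0 : Z 0 = Y 0)
    (hZs : ∀ t ω, Z (t + 1) ω = if ε (t + 1) ω = 1 then Z t ω else Y (t + 1) ω)
    (T : ℕ) (hT : 1 ≤ T) :
    (P {ω | (∀ t < T, X t ω < Z t ω) ∧ Z T ω ≤ X T ω}).toReal
      ≤ (η * (∫ y in Set.Icc (0:ℝ) 1, (μF (Set.Ico 0 y)).toReal ∂μG)
          + (1 - η) * (∫ y in Set.Icc (0:ℝ) 1, (μF (Set.Ico 0 y)).toReal ∂μG)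
            * (∫ y in Set.Icc (0:ℝ) 1, (1 - (μF (Set.Ico 0 y)).toReal) ∂μG))
        * (η + (1 - η) * (∫ y in Set.Icc (0:ℝ) 1, (μF (Set.Ico 0 y)).toReal ∂μG)) ^ (T - 1) := by
  classical
  obtain ⟨hη0, hη1⟩ := hη
  -- basic facts about the integral a
  set a : ℝ := ∫ y in Set.Icc (0:ℝ) 1, (μF (Set.Ico 0 y)).toReal ∂μG with ha_def
  have hmeasF : Measurable fun y : ℝ => (μF (Set.Ico 0 y)).toReal :=
    (Monotone.measurable (fun _ _ h => measure_mono (Set.Ico_subset_Ico_right h))).ennreal_toReal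
  have hle1 : ∀ y : ℝ, (μF (Set.Ico 0 y)).toReal ≤ 1 := fun y => by
    simpa using ENNReal.toReal_mono ENNReal.one_ne_top (prob_le_one (s := Set.Ico 0 y))
  have hInt : Integrable (fun y : ℝ => (μF (Set.Ico 0 y)).toReal)
      (μG.restrict (Set.Icc 0 1)) := by
    refine Integrable.mono' (integrable_const 1) hmeasF.aestronglyMeasurable ?_
    exact Filter.Eventually.of_forall fun y => by
      rw [Real.norm_eq_abs, abs_of_nonneg ENNReal.toReal_nonneg]; exact hle1 y
  have ha0 : 0 ≤ a := integral_nonneg fun y => ENNReal.toReal_nonneg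
  have ha1 : a ≤ 1 := by
    have := integral_mono hInt (integrable_const 1) fun y => hle1 y
    simpa [Measure.restrict_apply_univ, Measure.real, hμG] using this
  have hbint : ∫ y in Set.Icc (0:ℝ) 1, (1 - (μF (Set.Ico 0 y)).toReal) ∂μG = 1 - a := by
    rw [integral_sub (integrable_const 1) hInt, ha_def]
    simp [Measure.restrict_apply_univ, Measure.real, hμG]
  -- independence set-up
  set f : (ℕ ⊕ (ℕ ⊕ ℕ)) → Ω → ℝ := Sum.elim X (Sum.elim Y ε) with hf_def
  have hM_le : ∀ i, MeasurableSpace.comap (f i) inferInstance ≤ ‹MeasurableSpace Ω› := by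
    rintro (t | t | t)
    · exact (hX t).comap_le
    · exact (hY t).comap_le
    · exact (hε t).comap_le
  set tm : (ℕ ⊕ (ℕ ⊕ ℕ)) → ℕ := Sum.elim id (Sum.elim id id) with htm_def
  set pastσ : ℕ → MeasurableSpace Ω :=
    fun T => ⨆ i ∈ {i | tm i < T}, MeasurableSpace.comap (f i) inferInstance with hpast_def
  set futσ : ℕ → MeasurableSpace Ω :=
    fun T => ⨆ i ∈ {i | T ≤ tm i}, MeasurableSpace.comap (f i) inferInstance with hfut_def
  have hmem_past : ∀ (T : ℕ) (i : ℕ ⊕ (ℕ ⊕ ℕ)), tm i < T →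
      MeasurableSpace.comap (f i) inferInstance ≤ pastσ T := fun T i hi =>
    le_biSup (fun j => MeasurableSpace.comap (f j) inferInstance)
      (show i ∈ {j | tm j < T} from hi)
  have hmem_fut : ∀ (T : ℕ) (i : ℕ ⊕ (ℕ ⊕ ℕ)), T ≤ tm i →
      MeasurableSpace.comap (f i) inferInstance ≤ futσ T := fun T i hi =>
    le_biSup (fun j => MeasurableSpace.comap (f j) inferInstance)
      (show i ∈ {j | T ≤ tm j} from hi)
  have hXpast : ∀ T t, t < T → Measurable[pastσ T] (X t) := fun T t ht =>
    (comap_measurable (f (Sum.inl t))).mono (hmem_past T _ ht) le_rfl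
  have hYpast : ∀ T t, t < T → Measurable[pastσ T] (Y t) := fun T t ht =>
    (comap_measurable (f (Sum.inr (Sum.inl t)))).mono (hmem_past T _ ht) le_rfl
  have hεpast : ∀ T t, t < T → Measurable[pastσ T] (ε t) := fun T t ht =>
    (comap_measurable (f (Sum.inr (Sum.inr t)))).mono (hmem_past T _ ht) le_rfl
  have hZpast : ∀ T t, t < T → Measurable[pastσ T] (Z t) := by
    intro T t
    induction t with
    | zero => intro h0; rw [hZ0]; exact hYpast T 0 h0
    | succ t ih =>
      intro h
      have h' : t < T := lt_trans (Nat.lt_succ_self t) h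
      have hfun : Z (t + 1) = fun ω => if ε (t + 1) ω = 1 then Z t ω else Y (t + 1) ω :=
        funext fun ω => hZs t ω
      rw [hfun]
      exact Measurable.ite ((hεpast T (t + 1) h) (measurableSet_singleton 1)) (ih h')
        (hYpast T (t + 1) h)
  have hXfut : ∀ T, Measurable[futσ T] (X T) := fun T =>
    (comap_measurable (f (Sum.inl T))).mono (hmem_fut T _ le_rfl) le_rfl
  have hYfut : ∀ T, Measurable[futσ T] (Y T) := fun T =>
    (comap_measurable (f (Sum.inr (Sum.inl T)))).mono (hmem_fut T _ le_rfl) le_rfl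
  have hεfut : ∀ T, Measurable[futσ T] (ε T) := fun T =>
    (comap_measurable (f (Sum.inr (Sum.inr T)))).mono (hmem_fut T _ le_rfl) le_rfl
  set Sv : ℕ → Set Ω := fun T => {ω | ∀ t < T, X t ω < Z t ω} with hSv_def
  have hSmeas : ∀ T, MeasurableSet[pastσ T] (Sv T) := by
    intro T
    have : Sv T = ⋂ t, ⋂ (_ : t < T), {ω | X t ω < Z t ω} := by
      ext ω; simp [hSv_def]
    rw [this]
    exact MeasurableSet.iInter fun t => MeasurableSet.iInter fun ht =>
      measurableSet_lt (hXpast T t ht) (hZpast T t ht)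
  have hsplit : ∀ (T : ℕ) (A B : Set Ω), MeasurableSet[pastσ T] A → MeasurableSet[futσ T] B →
      P (A ∩ B) = P A * P B := by
    intro T A B hA hB
    have hdisj : Disjoint {i | tm i < T} {i | T ≤ tm i} := by
      rw [Set.disjoint_left]; intro i hi hi'
      simp only [Set.mem_setOf_eq] at hi hi'
      omega
    exact (Indep_iff _ _ _).mp (indep_iSup_of_disjoint hM_le hindep.iIndep hdisj) A B hA hB
  -- pair / epsilon σ-algebras at a single time
  set pairσ : ℕ → MeasurableSpace Ω := fun T =>
    ⨆ i ∈ ({Sum.inl T, Sum.inr (Sum.inl T)} : Set (ℕ ⊕ (ℕ ⊕ ℕ))),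
      MeasurableSpace.comap (f i) inferInstance with hpair_def
  set epsσ : ℕ → MeasurableSpace Ω := fun T =>
    ⨆ i ∈ ({Sum.inr (Sum.inr T)} : Set (ℕ ⊕ (ℕ ⊕ ℕ))),
      MeasurableSpace.comap (f i) inferInstance with heps_def
  have hXpair : ∀ T, Measurable[pairσ T] (X T) := fun T =>
    (comap_measurable (f (Sum.inl T))).mono
      (le_biSup (fun j => MeasurableSpace.comap (f j) inferInstance)
        (Set.mem_insert _ _)) le_rfl
  have hYpair : ∀ T, Measurable[pairσ T] (Y T) := fun T =>
    (comap_measurable (f (Sum.inr (Sum.inl T)))).mono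
      (le_biSup (fun j => MeasurableSpace.comap (f j) inferInstance)
        (Set.mem_insert_of_mem _ rfl)) le_rfl
  have hεeps : ∀ T, Measurable[epsσ T] (ε T) := fun T =>
    (comap_measurable (f (Sum.inr (Sum.inr T)))).mono
      (le_biSup (fun j => MeasurableSpace.comap (f j) inferInstance) rfl) le_rfl
  have hsplit2 : ∀ (T : ℕ) (B C : Set Ω), MeasurableSet[epsσ T] B →
      MeasurableSet[pairσ T] C → P (B ∩ C) = P B * P C := by
    intro T B C hB hC
    have hdisj : Disjoint ({Sum.inr (Sum.inr T)} : Set (ℕ ⊕ (ℕ ⊕ ℕ)))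
        ({Sum.inl T, Sum.inr (Sum.inl T)} : Set (ℕ ⊕ (ℕ ⊕ ℕ))) := by
      rw [Set.disjoint_left]; rintro i rfl h; simp at h
    exact (Indep_iff _ _ _).mp (indep_iSup_of_disjoint hM_le hindep.iIndep hdisj) B C hB hC
  -- elementary laws
  have hPε1 : ∀ t, P (ε t ⁻¹' {1}) = ENNReal.ofReal η := by
    intro t
    rw [← Measure.map_apply (hε t) (measurableSet_singleton 1), hεlaw t]
    simp [Measure.dirac_apply]
  have hPεne : ∀ t, P (ε t ⁻¹' {1}ᶜ) = ENNReal.ofReal (1 - η) := by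
    intro t
    rw [← Measure.map_apply (hε t) (measurableSet_singleton 1).compl, hεlaw t]
    simp [Measure.dirac_apply]
  have hindXY : ∀ t : ℕ, IndepFun (Y t) (X t) P := by
    intro t
    have h := hindep.indepFun
      (show (Sum.inr (Sum.inl t) : ℕ ⊕ (ℕ ⊕ ℕ)) ≠ Sum.inl t by simp)
    simpa [hf_def] using h
  have hPXY : ∀ t, P {ω | X t ω < Y t ω} = ENNReal.ofReal a := by
    intro t
    rw [ha_def]
    exact law_lt_aux P μF μG hμF hμG (X t) (Y t) (hX t) (hY t) (hXlaw t) (hYlaw t) (hindXY t)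
  have hPYX : ∀ t, P {ω | Y t ω ≤ X t ω} = 1 - ENNReal.ofReal a := by
    intro t
    have hc : {ω | Y t ω ≤ X t ω} = {ω | X t ω < Y t ω}ᶜ := by
      ext ω; simp [not_lt]
    rw [hc, measure_compl (measurableSet_lt (hX t) (hY t)) (measure_ne_top _ _), measure_univ,
      hPXY t]
  -- key one-step identities
  have key1 : ∀ T : ℕ, P (Sv T ∩ ε T ⁻¹' {1}) = P (Sv T) * ENNReal.ofReal η := by
    intro T
    rw [hsplit T _ _ (hSmeas T) ((hεfut T) (measurableSet_singleton 1)), hPε1 T]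
  have key0lt : ∀ T : ℕ, P (Sv T ∩ (ε T ⁻¹' {1}ᶜ ∩ {ω | X T ω < Y T ω}))
      = P (Sv T) * (ENNReal.ofReal (1 - η) * ENNReal.ofReal a) := by
    intro T
    have hBC : MeasurableSet[futσ T] (ε T ⁻¹' {1}ᶜ ∩ {ω | X T ω < Y T ω}) :=
      (((hεfut T) (measurableSet_singleton 1).compl)).inter
        (measurableSet_lt (hXfut T) (hYfut T))
    rw [hsplit T _ _ (hSmeas T) hBC,
      hsplit2 T _ _ ((hεeps T) (measurableSet_singleton 1).compl)
        (measurableSet_lt (hXpair T) (hYpair T)),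
      hPεne T, hPXY T]
  have key0le : ∀ T : ℕ, P (Sv T ∩ (ε T ⁻¹' {1}ᶜ ∩ {ω | Y T ω ≤ X T ω}))
      = P (Sv T) * (ENNReal.ofReal (1 - η) * (1 - ENNReal.ofReal a)) := by
    intro T
    have hBC : MeasurableSet[futσ T] (ε T ⁻¹' {1}ᶜ ∩ {ω | Y T ω ≤ X T ω}) :=
      (((hεfut T) (measurableSet_singleton 1).compl)).inter
        (measurableSet_le (hYfut T) (hXfut T))
    rw [hsplit T _ _ (hSmeas T) hBC,
      hsplit2 T _ _ ((hεeps T) (measurableSet_singleton 1).compl)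
        (measurableSet_le (hYpair T) (hXpair T)),
      hPεne T, hPYX T]
  -- the recursion
  set ρ : ℝ≥0∞ := ENNReal.ofReal η + ENNReal.ofReal (1 - η) * ENNReal.ofReal a with hρ_def
  have main : ∀ k : ℕ, P (Sv (k + 1)) ≤ ENNReal.ofReal a * ρ ^ k := by
    intro k
    induction k with
    | zero =>
      have hSv1 : Sv 1 = {ω | X 0 ω < Y 0 ω} := by
        ext ω; simp [hSv_def, Nat.lt_one_iff, hZ0]
      rw [hSv1, pow_zero, mul_one]
      exact le_of_eq (hPXY 0)
    | succ k ih =>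
      have hsub : Sv (k + 2) ⊆ (Sv (k + 1) ∩ ε (k + 1) ⁻¹' {1})
          ∪ (Sv (k + 1) ∩ (ε (k + 1) ⁻¹' {1}ᶜ ∩ {ω | X (k + 1) ω < Y (k + 1) ω})) := by
        intro ω hω
        have hω' : ∀ t < k + 2, X t ω < Z t ω := hω
        have hS : ω ∈ Sv (k + 1) := fun t ht => hω' t (lt_trans ht (Nat.lt_succ_self _))
        by_cases hε1 : ε (k + 1) ω = 1
        · exact Or.inl ⟨hS, hε1⟩
        · refine Or.inr ⟨hS, hε1, ?_⟩
          have hz := hZs k ω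
          rw [if_neg hε1] at hz
          have hlt := hω' (k + 1) (Nat.lt_succ_self _)
          rwa [hz] at hlt
      calc P (Sv (k + 2)) ≤ P ((Sv (k + 1) ∩ ε (k + 1) ⁻¹' {1})
          ∪ (Sv (k + 1) ∩ (ε (k + 1) ⁻¹' {1}ᶜ ∩ {ω | X (k + 1) ω < Y (k + 1) ω}))) :=
            measure_mono hsub
        _ ≤ P (Sv (k + 1) ∩ ε (k + 1) ⁻¹' {1})
            + P (Sv (k + 1) ∩ (ε (k + 1) ⁻¹' {1}ᶜ ∩ {ω | X (k + 1) ω < Y (k + 1) ω})) :=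
            measure_union_le _ _
        _ = P (Sv (k + 1)) * ENNReal.ofReal η
            + P (Sv (k + 1)) * (ENNReal.ofReal (1 - η) * ENNReal.ofReal a) := by
            rw [key1, key0lt]
        _ = P (Sv (k + 1)) * ρ := by rw [hρ_def, mul_add]
        _ ≤ (ENNReal.ofReal a * ρ ^ k) * ρ := mul_le_mul_left ih ρ
        _ = ENNReal.ofReal a * ρ ^ (k + 1) := by ring
  -- conclude
  obtain ⟨k, rfl⟩ : ∃ k, T = k + 1 := ⟨T - 1, (Nat.succ_pred_eq_of_pos hT).symm⟩
  have hEsub : {ω | (∀ t < k + 1, X t ω < Z t ω) ∧ Z (k + 1) ω ≤ X (k + 1) ω}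
      ⊆ (Sv (k + 1) ∩ ε (k + 1) ⁻¹' {1})
        ∪ (Sv (k + 1) ∩ (ε (k + 1) ⁻¹' {1}ᶜ ∩ {ω | Y (k + 1) ω ≤ X (k + 1) ω})) := by
    rintro ω ⟨hsurv, hfail⟩
    have hS : ω ∈ Sv (k + 1) := hsurv
    by_cases hε1 : ε (k + 1) ω = 1
    · exact Or.inl ⟨hS, hε1⟩
    · refine Or.inr ⟨hS, hε1, ?_⟩
      have hz := hZs k ω
      rw [if_neg hε1] at hz
      rwa [hz] at hfail
  have hPbound : P {ω | (∀ t < k + 1, X t ω < Z t ω) ∧ Z (k + 1) ω ≤ X (k + 1) ω}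
      ≤ ENNReal.ofReal a * ρ ^ k
        * (ENNReal.ofReal η + ENNReal.ofReal (1 - η) * (1 - ENNReal.ofReal a)) := by
    calc P {ω | (∀ t < k + 1, X t ω < Z t ω) ∧ Z (k + 1) ω ≤ X (k + 1) ω}
        ≤ P ((Sv (k + 1) ∩ ε (k + 1) ⁻¹' {1})
          ∪ (Sv (k + 1) ∩ (ε (k + 1) ⁻¹' {1}ᶜ ∩ {ω | Y (k + 1) ω ≤ X (k + 1) ω}))) :=
          measure_mono hEsub
      _ ≤ P (Sv (k + 1) ∩ ε (k + 1) ⁻¹' {1})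
          + P (Sv (k + 1) ∩ (ε (k + 1) ⁻¹' {1}ᶜ ∩ {ω | Y (k + 1) ω ≤ X (k + 1) ω})) :=
          measure_union_le _ _
      _ = P (Sv (k + 1)) * ENNReal.ofReal η
          + P (Sv (k + 1)) * (ENNReal.ofReal (1 - η) * (1 - ENNReal.ofReal a)) := by
          rw [key1, key0le]
      _ = P (Sv (k + 1))
          * (ENNReal.ofReal η + ENNReal.ofReal (1 - η) * (1 - ENNReal.ofReal a)) := by
          rw [mul_add]
      _ ≤ ENNReal.ofReal a * ρ ^ k
          * (ENNReal.ofReal η + ENNReal.ofReal (1 - η) * (1 - ENNReal.ofReal a)) :=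
          mul_le_mul_left (main k) _
  -- numeric conversion
  have h1a : (1 : ℝ≥0∞) - ENNReal.ofReal a = ENNReal.ofReal (1 - a) := by
    have h := ENNReal.ofReal_sub 1 ha0
    rw [ENNReal.ofReal_one] at h
    exact h.symm
  have hρ_real : ρ = ENNReal.ofReal (η + (1 - η) * a) := by
    rw [hρ_def, ENNReal.ofReal_add hη0 (mul_nonneg (by linarith) ha0),
      ENNReal.ofReal_mul (by linarith)]
  have hbase : 0 ≤ η + (1 - η) * a := by nlinarith
  have hbig : ENNReal.ofReal a * ρ ^ k
      * (ENNReal.ofReal η + ENNReal.ofReal (1 - η) * (1 - ENNReal.ofReal a))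
      = ENNReal.ofReal ((η * a + (1 - η) * a * (1 - a)) * (η + (1 - η) * a) ^ k) := by
    rw [h1a, hρ_real, ← ENNReal.ofReal_mul (by linarith), ← ENNReal.ofReal_add hη0
      (mul_nonneg (by linarith) (by linarith)), ← ENNReal.ofReal_pow hbase,
      ← ENNReal.ofReal_mul ha0, ← ENNReal.ofReal_mul (mul_nonneg ha0 (pow_nonneg hbase k))]
    congr 1
    ring
  rw [hbint, Nat.add_sub_cancel]
  refine ENNReal.toReal_le_of_le_ofReal ?_ ?_
  · have hcoef : 0 ≤ η * a + (1 - η) * a * (1 - a) := by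
      have h1 : (0:ℝ) ≤ η * a := mul_nonneg hη0 ha0
      have h2 : (0:ℝ) ≤ (1 - η) * a * (1 - a) :=
        mul_nonneg (mul_nonneg (by linarith) ha0) (by linarith)
      linarith
    exact mul_nonneg hcoef (pow_nonneg hbase k)
  · rw [← hbig]
    exact hPbound
end

section
/- Let 0 ≤ η < 1 and consider the threshold-of-instability process with uniform state and threshold distributions on [0,1] and memory parameter η (X_t i.i.d. uniform; Z₀ uniform, Z_t = Z_{t−1} with probability η and Z_t a fresh uniform variable with probability 1−η, all independent). Then the quiescent-time distribution P_η(T) = Pr[X_t < Z_t for all t < T and X_T ≥ Z_T] satisfies P_η(T) ≤ (1/2)·((1+η)/2)^T for all natural numbers T. -/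
open MeasureTheory ProbabilityTheory

noncomputable def muU : Measure ℝ := volume.restrict (Set.Icc (0:ℝ) 1)

instance : SFinite muU := by unfold muU; infer_instance

instance muU_prob : IsProbabilityMeasure muU := by
  constructor
  simp [muU, Real.volume_Icc]

lemma muU_lt : (muU.prod muU) {p : ℝ × ℝ | p.1 < p.2} = ENNReal.ofReal (1/2) := by
  rw [Measure.prod_apply (measurableSet_lt measurable_fst measurable_snd)]
  have h1 : ∀ᵐ x ∂(volume : Measure ℝ), x ∈ Set.Icc (0:ℝ) 1 →
      muU (Prod.mk x ⁻¹' {p : ℝ × ℝ | p.1 < p.2}) = ENNReal.ofReal (1 - x) := by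
    refine Filter.Eventually.of_forall fun x hx => ?_
    have h : Prod.mk x ⁻¹' {p : ℝ × ℝ | p.1 < p.2} = Set.Ioi x := rfl
    rw [h, muU, Measure.restrict_apply measurableSet_Ioi]
    have h2 : Set.Ioi x ∩ Set.Icc 0 1 = Set.Ioc x 1 := by
      ext y; simp only [Set.mem_inter_iff, Set.mem_Ioi, Set.mem_Icc, Set.mem_Ioc]
      exact ⟨fun ⟨h, _, h2⟩ => ⟨h, h2⟩, fun ⟨h, h2⟩ => ⟨h, le_trans hx.1 h.le, h2⟩⟩
    rw [h2, Real.volume_Ioc]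
  have h2 : ∫⁻ x, muU (Prod.mk x ⁻¹' {p : ℝ × ℝ | p.1 < p.2}) ∂muU
      = ∫⁻ x in Set.Icc (0:ℝ) 1, ENNReal.ofReal (1 - x) ∂volume :=
    setLIntegral_congr_fun_ae measurableSet_Icc h1
  rw [h2, ← ofReal_integral_eq_lintegral_ofReal]
  · rw [show ∫ x in Set.Icc (0:ℝ) 1, (1 - x) = 1/2 by
      rw [integral_Icc_eq_integral_Ioc, ← intervalIntegral.integral_of_le zero_le_one]
      simp [intervalIntegral.integral_sub intervalIntegrable_const
        intervalIntegral.intervalIntegrable_id]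
      norm_num]
  · exact (continuous_const.sub continuous_id).integrableOn_Icc
  · filter_upwards [ae_restrict_mem measurableSet_Icc] with x hx
    simp only [Pi.zero_apply]; linarith [hx.2]

lemma muU_le : (muU.prod muU) {p : ℝ × ℝ | p.2 ≤ p.1} = ENNReal.ofReal (1/2) := by
  have hc : {p : ℝ × ℝ | p.2 ≤ p.1} = {p : ℝ × ℝ | p.1 < p.2}ᶜ := by
    ext p; simp [not_lt]
  rw [hc, measure_compl (measurableSet_lt measurable_fst measurable_snd) (measure_ne_top _ _),
    muU_lt]
  have h : ENNReal.ofReal (1/2) = 2⁻¹ := by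
    rw [show (1:ℝ)/2 = 2⁻¹ by norm_num, ENNReal.ofReal_inv_of_pos (by norm_num)]
    norm_num
  rw [h, measure_univ, ENNReal.one_sub_inv_two]

noncomputable def muB (η : ℝ) : Measure ℝ :=
  ENNReal.ofReal η • Measure.dirac (1:ℝ) + ENNReal.ofReal (1 - η) • Measure.dirac (0:ℝ)

instance (η : ℝ) : SFinite (muB η) := by unfold muB; infer_instance

lemma muB_one (η : ℝ) : muB η {1} = ENNReal.ofReal η := by
  simp [muB, Measure.dirac_apply' _ (measurableSet_singleton _)]

lemma muB_one_compl (η : ℝ) : muB η {1}ᶜ = ENNReal.ofReal (1 - η) := by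
  have h0 : (0:ℝ) ∈ ({1}ᶜ : Set ℝ) := by norm_num
  have h1 : (1:ℝ) ∉ ({1}ᶜ : Set ℝ) := by norm_num
  simp [muB, Measure.dirac_apply' _ (measurableSet_singleton _).compl,
    Set.indicator_of_mem h0, Set.indicator_of_notMem h1]

lemma measSet_lt : MeasurableSet {p : ℝ × ℝ | p.1 < p.2} :=
  measurableSet_lt measurable_fst measurable_snd

lemma measSet_le : MeasurableSet {p : ℝ × ℝ | p.2 ≤ p.1} :=
  measurableSet_le measurable_snd measurable_fst

lemma lawW_mid {η : ℝ} (hη : η ∈ Set.Ico (0:ℝ) 1) :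
    ((muU.prod muU).prod (muB η)) {q : (ℝ × ℝ) × ℝ | q.2 = 1 ∨ q.1.1 < q.1.2}
      = ENNReal.ofReal ((1 + η) / 2) := by
  have hset : {q : (ℝ × ℝ) × ℝ | q.2 = 1 ∨ q.1.1 < q.1.2}
      = (Set.univ ×ˢ {1}) ∪ ({p : ℝ × ℝ | p.1 < p.2} ×ˢ ({1}ᶜ : Set ℝ)) := by
    ext q
    simp only [Set.mem_setOf_eq, Set.mem_union, Set.mem_prod, Set.mem_univ, true_and,
      Set.mem_singleton_iff, Set.mem_compl_iff]
    tauto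
  have hdisj : Disjoint (Set.univ ×ˢ ({1} : Set ℝ))
      ({p : ℝ × ℝ | p.1 < p.2} ×ˢ ({1}ᶜ : Set ℝ)) := by
    rw [Set.disjoint_iff]
    rintro ⟨p, x⟩ ⟨⟨-, h1⟩, -, h2⟩
    exact h2 h1
  rw [hset, measure_union hdisj (measSet_lt.prod (measurableSet_singleton _).compl),
    Measure.prod_prod, Measure.prod_prod, measure_univ, one_mul, muB_one, muB_one_compl,
    muU_lt, ← ENNReal.ofReal_mul (by norm_num), ← ENNReal.ofReal_add hη.1 (by nlinarith [hη.2])]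
  ring_nf

lemma lawW_last {η : ℝ} (hη : η ∈ Set.Ico (0:ℝ) 1) :
    ((muU.prod muU).prod (muB η)) {q : (ℝ × ℝ) × ℝ | q.2 = 1 ∨ q.1.2 ≤ q.1.1}
      = ENNReal.ofReal ((1 + η) / 2) := by
  have hset : {q : (ℝ × ℝ) × ℝ | q.2 = 1 ∨ q.1.2 ≤ q.1.1}
      = (Set.univ ×ˢ {1}) ∪ ({p : ℝ × ℝ | p.2 ≤ p.1} ×ˢ ({1}ᶜ : Set ℝ)) := by
    ext q
    simp only [Set.mem_setOf_eq, Set.mem_union, Set.mem_prod, Set.mem_univ, true_and,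
      Set.mem_singleton_iff, Set.mem_compl_iff]
    tauto
  have hdisj : Disjoint (Set.univ ×ˢ ({1} : Set ℝ))
      ({p : ℝ × ℝ | p.2 ≤ p.1} ×ˢ ({1}ᶜ : Set ℝ)) := by
    rw [Set.disjoint_iff]
    rintro ⟨p, x⟩ ⟨⟨-, h1⟩, -, h2⟩
    exact h2 h1
  rw [hset, measure_union hdisj (measSet_le.prod (measurableSet_singleton _).compl),
    Measure.prod_prod, Measure.prod_prod, measure_univ, one_mul, muB_one, muB_one_compl,
    muU_le, ← ENNReal.ofReal_mul (by norm_num), ← ENNReal.ofReal_add hη.1 (by nlinarith [hη.2])]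
  ring_nf

lemma muB_univ {η : ℝ} (hη : η ∈ Set.Ico (0:ℝ) 1) : muB η Set.univ = 1 := by
  have h2 : (0:ℝ) ≤ 1 - η := by linarith [hη.2]
  simp only [muB, Measure.add_apply, Measure.smul_apply, Measure.dirac_apply' _ MeasurableSet.univ,
    Set.mem_univ, Set.indicator_of_mem, smul_eq_mul, mul_one, Pi.one_apply]
  rw [← ENNReal.ofReal_add hη.1 h2]
  norm_num

lemma lawW_first {η : ℝ} (hη : η ∈ Set.Ico (0:ℝ) 1) :
    ((muU.prod muU).prod (muB η)) {q : (ℝ × ℝ) × ℝ | q.1.1 < q.1.2}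
      = ENNReal.ofReal (1/2) := by
  have hset : {q : (ℝ × ℝ) × ℝ | q.1.1 < q.1.2}
      = {p : ℝ × ℝ | p.1 < p.2} ×ˢ (Set.univ : Set ℝ) := by
    ext q; simp [Set.mem_prod]
  rw [hset, Measure.prod_prod, muB_univ hη, mul_one, muU_lt]

lemma lawW_first' {η : ℝ} (hη : η ∈ Set.Ico (0:ℝ) 1) :
    ((muU.prod muU).prod (muB η)) {q : (ℝ × ℝ) × ℝ | q.1.2 ≤ q.1.1}
      = ENNReal.ofReal (1/2) := by
  have hset : {q : (ℝ × ℝ) × ℝ | q.1.2 ≤ q.1.1}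
      = {p : ℝ × ℝ | p.2 ≤ p.1} ×ˢ (Set.univ : Set ℝ) := by
    ext q; simp [Set.mem_prod]
  rw [hset, Measure.prod_prod, muB_univ hη, mul_one, muU_le]




/-- Threshold-of-instability model with uniform state and threshold distributions on
`[0,1]` and memory parameter `0 ≤ η < 1`: with `X_t` i.i.d. uniform, candidate
thresholds `Y_t` i.i.d. uniform, Bernoulli(η) variables `ε_t` (`{0,1}`-valued), all
mutually independent, and `Z₀ = Y₀`, `Z_{t+1} = Z_t` if `ε_{t+1} = 1`,
`Z_{t+1} = Y_{t+1}` otherwise, the quiescent-time distribution satisfies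
`P_η(T) ≤ (1/2)·((1+η)/2)^T` for all natural numbers `T`. -/
theorem stmt_11 {Ω : Type*} [MeasurableSpace Ω] (P : Measure Ω) [IsProbabilityMeasure P]
    (η : ℝ) (hη : η ∈ Set.Ico (0:ℝ) 1)
    (X Y ε : ℕ → Ω → ℝ)
    (hX : ∀ t, Measurable (X t)) (hY : ∀ t, Measurable (Y t)) (hε : ∀ t, Measurable (ε t))
    (hXlaw : ∀ t, P.map (X t) = volume.restrict (Set.Icc (0:ℝ) 1))
    (hYlaw : ∀ t, P.map (Y t) = volume.restrict (Set.Icc (0:ℝ) 1))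
    (hεlaw : ∀ t, P.map (ε t)
      = ENNReal.ofReal η • Measure.dirac (1:ℝ) + ENNReal.ofReal (1 - η) • Measure.dirac (0:ℝ))
    (hindep : iIndepFun (Sum.elim X (Sum.elim Y ε)) P)
    (Z : ℕ → Ω → ℝ)
    (hZ0 : Z 0 = Y 0)
    (hZs : ∀ t ω, Z (t + 1) ω = if ε (t + 1) ω = 1 then Z t ω else Y (t + 1) ω)
    (T : ℕ) :
    (P {ω | (∀ t < T, X t ω < Z t ω) ∧ Z T ω ≤ X T ω}).toReal
      ≤ (1 / 2) * ((1 + η) / 2) ^ T := by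
  classical
  set f : (ℕ ⊕ ℕ ⊕ ℕ) → Ω → ℝ := Sum.elim X (Sum.elim Y ε) with hfdef
  have hfm : ∀ i, Measurable (f i) := by
    rintro (t | t | t)
    exacts [hX t, hY t, hε t]
  set W : ℕ → Ω → (ℝ × ℝ) × ℝ := fun t ω => ((X t ω, Y t ω), ε t ω) with hWdef
  have hWm : ∀ t, Measurable (W t) := fun t => ((hX t).prodMk (hY t)).prodMk (hε t)
  set blk : ℕ → Finset (ℕ ⊕ ℕ ⊕ ℕ) :=
    fun t => {Sum.inl t, Sum.inr (Sum.inl t), Sum.inr (Sum.inr t)} with hblk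
  -- block membership facts
  have hm1 : ∀ t, (Sum.inl t : ℕ ⊕ ℕ ⊕ ℕ) ∈ blk t := by intro t; simp [hblk]
  have hm2 : ∀ t, (Sum.inr (Sum.inl t) : ℕ ⊕ ℕ ⊕ ℕ) ∈ blk t := by intro t; simp [hblk]
  have hm3 : ∀ t, (Sum.inr (Sum.inr t) : ℕ ⊕ ℕ ⊕ ℕ) ∈ blk t := by intro t; simp [hblk]
  -- grouped independence: W n is independent of (W t)_{t < n}
  have hgrp : ∀ n, IndepFun (W n) (fun ω (t : (Finset.range n : Finset ℕ)) => W t.1 ω) P := by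
    intro n
    have hd : Disjoint (blk n) ((Finset.range n).biUnion blk) := by
      rw [Finset.disjoint_left]
      intro i hi hib
      obtain ⟨t, ht, hit⟩ := Finset.mem_biUnion.1 hib
      rw [Finset.mem_range] at ht
      simp only [hblk, Finset.mem_insert, Finset.mem_singleton] at hi hit
      rcases hi with h | h | h <;> rcases hit with h' | h' | h' <;>
        (try (rw [h] at h'; injections)) <;> omega
    have h0 := hindep.indepFun_finset (blk n) ((Finset.range n).biUnion blk) hd hfm
    have hφ : Measurable (fun g : ((blk n : Finset (ℕ ⊕ ℕ ⊕ ℕ)) : Type) → ℝ =>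
        ((g ⟨Sum.inl n, hm1 n⟩, g ⟨Sum.inr (Sum.inl n), hm2 n⟩),
          g ⟨Sum.inr (Sum.inr n), hm3 n⟩)) :=
      ((measurable_pi_apply _).prodMk (measurable_pi_apply _)).prodMk (measurable_pi_apply _)
    have hmem : ∀ (t : (Finset.range n : Finset ℕ)) (i : ℕ ⊕ ℕ ⊕ ℕ), i ∈ blk t.1 →
        i ∈ (Finset.range n).biUnion blk :=
      fun t i hi => Finset.mem_biUnion.2 ⟨t.1, t.2, hi⟩
    have hψ : Measurable (fun g : (((Finset.range n).biUnion blk : Finset (ℕ ⊕ ℕ ⊕ ℕ)) : Type) → ℝ =>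
        fun t : (Finset.range n : Finset ℕ) =>
        ((g ⟨Sum.inl t.1, hmem t _ (hm1 t.1)⟩, g ⟨Sum.inr (Sum.inl t.1), hmem t _ (hm2 t.1)⟩),
          g ⟨Sum.inr (Sum.inr t.1), hmem t _ (hm3 t.1)⟩)) :=
      measurable_pi_lambda _ fun t =>
        ((measurable_pi_apply _).prodMk (measurable_pi_apply _)).prodMk (measurable_pi_apply _)
    exact h0.comp hφ hψ
  -- law of W t
  have hlawW : ∀ t, P.map (W t)
      = ((volume.restrict (Set.Icc (0:ℝ) 1)).prod (volume.restrict (Set.Icc (0:ℝ) 1))).prod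
        (ENNReal.ofReal η • Measure.dirac (1:ℝ) + ENNReal.ofReal (1 - η) • Measure.dirac (0:ℝ)) := by
    intro t
    have h1 : IndepFun (X t) (Y t) P := by
      have := hindep.indepFun (show (Sum.inl t : ℕ ⊕ ℕ ⊕ ℕ) ≠ Sum.inr (Sum.inl t) by simp)
      exact this
    have hpair : P.map (fun ω => (X t ω, Y t ω))
        = (volume.restrict (Set.Icc (0:ℝ) 1)).prod (volume.restrict (Set.Icc (0:ℝ) 1)) := by
      rw [(indepFun_iff_map_prod_eq_prod_map_map (hX t).aemeasurable (hY t).aemeasurable).1 h1,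
        hXlaw t, hYlaw t]
    have h2 : IndepFun (fun ω => (X t ω, Y t ω)) (ε t) P := by
      have hd : Disjoint ({Sum.inl t, Sum.inr (Sum.inl t)} : Finset (ℕ ⊕ ℕ ⊕ ℕ))
          {Sum.inr (Sum.inr t)} := by simp
      have h0 := hindep.indepFun_finset _ _ hd hfm
      have hmem1 : (Sum.inl t : ℕ ⊕ ℕ ⊕ ℕ) ∈
          ({Sum.inl t, Sum.inr (Sum.inl t)} : Finset (ℕ ⊕ ℕ ⊕ ℕ)) := by simp
      have hmem2 : (Sum.inr (Sum.inl t) : ℕ ⊕ ℕ ⊕ ℕ) ∈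
          ({Sum.inl t, Sum.inr (Sum.inl t)} : Finset (ℕ ⊕ ℕ ⊕ ℕ)) := by simp
      have hmem3 : (Sum.inr (Sum.inr t) : ℕ ⊕ ℕ ⊕ ℕ) ∈
          ({Sum.inr (Sum.inr t)} : Finset (ℕ ⊕ ℕ ⊕ ℕ)) := by simp
      exact h0.comp
        (show Measurable (fun g : (({Sum.inl t, Sum.inr (Sum.inl t)} :
            Finset (ℕ ⊕ ℕ ⊕ ℕ)) : Type) → ℝ => (g ⟨_, hmem1⟩, g ⟨_, hmem2⟩)) from
          (measurable_pi_apply _).prodMk (measurable_pi_apply _))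
        (show Measurable (fun g : ((({Sum.inr (Sum.inr t)}) :
            Finset (ℕ ⊕ ℕ ⊕ ℕ)) : Type) → ℝ => g ⟨_, hmem3⟩) from measurable_pi_apply _)
    rw [show W t = fun ω => ((fun ω => (X t ω, Y t ω)) ω, ε t ω) from rfl,
      (indepFun_iff_map_prod_eq_prod_map_map ((hX t).prodMk (hY t)).aemeasurable
        (hε t).aemeasurable).1 h2, hpair, hεlaw t]
  -- specific sets
  set S : ℕ → Set ((ℝ × ℝ) × ℝ) := fun t =>
    if t = 0 then (if T = 0 then {q | q.1.2 ≤ q.1.1} else {q | q.1.1 < q.1.2})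
    else if t = T then {q | q.2 = 1 ∨ q.1.2 ≤ q.1.1}
    else {q | q.2 = 1 ∨ q.1.1 < q.1.2} with hSdef
  have hmlt : MeasurableSet {q : (ℝ × ℝ) × ℝ | q.1.1 < q.1.2} :=
    measurableSet_lt (measurable_fst.comp measurable_fst) (measurable_snd.comp measurable_fst)
  have hmle : MeasurableSet {q : (ℝ × ℝ) × ℝ | q.1.2 ≤ q.1.1} :=
    measurableSet_le (measurable_snd.comp measurable_fst) (measurable_fst.comp measurable_fst)
  have hmone : MeasurableSet {q : (ℝ × ℝ) × ℝ | q.2 = 1} :=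
    measurable_snd (measurableSet_singleton 1)
  have hSm : ∀ t, MeasurableSet (S t) := by
    intro t
    simp only [hSdef]
    split_ifs
    · exact hmle
    · exact hmlt
    · exact hmone.union hmle
    · exact hmone.union hmlt
  -- product formula
  have hprod : ∀ n, P (⋂ t ∈ Finset.range n, W t ⁻¹' S t)
      = ∏ t ∈ Finset.range n, P (W t ⁻¹' S t) := by
    intro n
    induction n with
    | zero => simp
    | succ n ih =>
      have hrepr : (⋂ t ∈ Finset.range n, W t ⁻¹' S t)
          = (fun ω (t : {x // x ∈ Finset.range n}) => W t.1 ω) ⁻¹'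
            {g : {x // x ∈ Finset.range n} → (ℝ × ℝ) × ℝ | ∀ t, g t ∈ S t.1} := by
        ext ω
        simp only [Set.mem_iInter, Set.mem_preimage, Set.mem_setOf_eq]
        exact ⟨fun h t => h t.1 t.2, fun h t ht => h ⟨t, ht⟩⟩
      have hBmeas : MeasurableSet
          {g : {x // x ∈ Finset.range n} → (ℝ × ℝ) × ℝ | ∀ t, g t ∈ S t.1} := by
        have he : {g : {x // x ∈ Finset.range n} → (ℝ × ℝ) × ℝ | ∀ t, g t ∈ S t.1}
            = Set.univ.pi fun t => S t.1 := by
          ext g; simp [Set.mem_pi]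
        rw [he]
        exact MeasurableSet.univ_pi fun t => hSm t.1
      rw [Finset.range_add_one, Finset.set_biInter_insert, Finset.prod_insert (by simp), hrepr,
        (hgrp n).measure_inter_preimage_eq_mul _ _ (hSm n) hBmeas, ← hrepr, ih]
  -- inclusion of the event
  have hsub : {ω | (∀ t < T, X t ω < Z t ω) ∧ Z T ω ≤ X T ω}
      ⊆ ⋂ t ∈ Finset.range (T + 1), W t ⁻¹' S t := by
    rintro ω ⟨h1, h2⟩
    simp only [Set.mem_iInter, Set.mem_preimage, Finset.mem_range]
    intro t ht
    have hZY : ∀ s, s ≠ 0 → ε s ω ≠ 1 → Z s ω = Y s ω := by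
      rintro (_ | s) hs hε1
      · exact absurd rfl hs
      · rw [hZs s ω, if_neg hε1]
    have hS0a : T = 0 → S 0 = {q : (ℝ × ℝ) × ℝ | q.1.2 ≤ q.1.1} := fun h => by
      simp [hSdef, h]
    have hS0b : T ≠ 0 → S 0 = {q : (ℝ × ℝ) × ℝ | q.1.1 < q.1.2} := fun h => by
      simp [hSdef, h]
    have hST : T ≠ 0 → S T = {q : (ℝ × ℝ) × ℝ | q.2 = 1 ∨ q.1.2 ≤ q.1.1} := fun h => by
      simp [hSdef, h]
    have hSmid : t ≠ 0 → t ≠ T → S t = {q : (ℝ × ℝ) × ℝ | q.2 = 1 ∨ q.1.1 < q.1.2} :=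
      fun h h' => by simp [hSdef, h, h']
    rcases eq_or_ne t 0 with rfl | ht0
    · rcases eq_or_ne T 0 with hT0 | hT0
      · rw [hS0a hT0]
        show Y 0 ω ≤ X 0 ω
        rw [← congrFun hZ0 ω, ← hT0]
        exact h2
      · rw [hS0b hT0]
        show X 0 ω < Y 0 ω
        rw [← congrFun hZ0 ω]
        exact h1 0 (Nat.pos_of_ne_zero hT0)
    · rcases eq_or_ne t T with rfl | htT
      · rw [hST ht0]
        by_cases hε1 : ε t ω = 1
        · exact Or.inl hε1
        · refine Or.inr ?_
          show Y t ω ≤ X t ω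
          rw [← hZY t ht0 hε1]
          exact h2
      · have htT' : t < T := by omega
        rw [hSmid ht0 htT]
        by_cases hε1 : ε t ω = 1
        · exact Or.inl hε1
        · refine Or.inr ?_
          show X t ω < Y t ω
          rw [← hZY t ht0 hε1]
          exact h1 t htT'
  -- values of the factors
  have hval : ∀ t, MeasurableSet (S t) → P (W t ⁻¹' S t)
      = (((volume.restrict (Set.Icc (0:ℝ) 1)).prod (volume.restrict (Set.Icc (0:ℝ) 1))).prod
        (ENNReal.ofReal η • Measure.dirac (1:ℝ)
          + ENNReal.ofReal (1 - η) • Measure.dirac (0:ℝ))) (S t) := by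
    intro t h
    rw [← hlawW t, Measure.map_apply (hWm t) h]
  have hfac0 : P (W 0 ⁻¹' S 0) = ENNReal.ofReal (1/2) := by
    rcases eq_or_ne T 0 with hT0 | hT0
    · have hS : S 0 = {q : (ℝ × ℝ) × ℝ | q.1.2 ≤ q.1.1} := by simp [hSdef, hT0]
      rw [hval 0 (hSm 0), hS]
      exact lawW_first' hη
    · have hS : S 0 = {q : (ℝ × ℝ) × ℝ | q.1.1 < q.1.2} := by simp [hSdef, hT0]
      rw [hval 0 (hSm 0), hS]
      exact lawW_first hη
  have hfacmid : ∀ t, t ≠ 0 → P (W t ⁻¹' S t) = ENNReal.ofReal ((1 + η)/2) := by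
    intro t h0
    rcases eq_or_ne t T with rfl | htT
    · have hS : S t = {q : (ℝ × ℝ) × ℝ | q.2 = 1 ∨ q.1.2 ≤ q.1.1} := by simp [hSdef, h0]
      rw [hval t (hSm t), hS]
      exact lawW_last hη
    · have hS : S t = {q : (ℝ × ℝ) × ℝ | q.2 = 1 ∨ q.1.1 < q.1.2} := by
        simp [hSdef, h0, htT]
      rw [hval t (hSm t), hS]
      exact lawW_mid hη
  have hP : ∏ t ∈ Finset.range (T + 1), P (W t ⁻¹' S t)
      = ENNReal.ofReal (1/2) * ENNReal.ofReal ((1 + η)/2) ^ T := by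
    rw [← Finset.mul_prod_erase _ _ (show 0 ∈ Finset.range (T + 1) by simp), hfac0]
    congr 1
    have hc : ∏ t ∈ (Finset.range (T + 1)).erase 0, P (W t ⁻¹' S t)
        = ∏ _t ∈ (Finset.range (T + 1)).erase 0, ENNReal.ofReal ((1 + η)/2) :=
      Finset.prod_congr rfl fun t ht => hfacmid t (Finset.mem_erase.1 ht).1
    rw [hc, Finset.prod_const, Finset.card_erase_of_mem (by simp), Finset.card_range]
    simp
  have hmono := measure_mono (μ := P) hsub
  rw [hprod (T + 1), hP] at hmono
  have hne : ENNReal.ofReal (1/2) * ENNReal.ofReal ((1 + η)/2) ^ T ≠ ⊤ :=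
    ENNReal.mul_ne_top ENNReal.ofReal_ne_top (ENNReal.pow_ne_top ENNReal.ofReal_ne_top)
  calc (P {ω | (∀ t < T, X t ω < Z t ω) ∧ Z T ω ≤ X T ω}).toReal
      ≤ (ENNReal.ofReal (1/2) * ENNReal.ofReal ((1 + η)/2) ^ T).toReal :=
        ENNReal.toReal_mono hne hmono
    _ = (1 / 2) * ((1 + η) / 2) ^ T := by
        rw [ENNReal.toReal_mul, ENNReal.toReal_pow, ENNReal.toReal_ofReal (by norm_num),
          ENNReal.toReal_ofReal (by linarith [hη.1])]
end
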